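/- arXiv:1003.4306 — 7 statements merged into one kernel-verified Lean document; each statement's English description precedes it below -/
import Mathlib

section
/- Let ℓ > 0 and let Z_ℓ be a real Gaussian random variable with mean -ℓ² and variance 2ℓ². Then E[min(1, e^{Z_ℓ})] = 2Φ(-ℓ/√2), where Φ denotes the cumulative distribution function of the standard normal distribution N(0,1). -/
open MeasureTheory ProbabilityTheory Real Set
open scoped NNReal ENNReal

/-- Φ, the CDF of the standard normal distribution N(0,1). -/
noncomputable def stdGaussianCDF (x : ℝ) : ℝ :=
  ProbabilityTheory.cdf (ProbabilityTheory.gaussianReal 0 1) x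

lemma my_gaussianReal_Iic (μ : ℝ) {v : ℝ≥0} (hv : v ≠ 0) (t : ℝ) :
    gaussianReal μ v (Iic t) = gaussianReal 0 1 (Iic ((t - μ) / Real.sqrt v)) := by
  have hvpos : (0:ℝ) < (v:ℝ) := NNReal.coe_pos.mpr (pos_iff_ne_zero.mpr hv)
  have hσ : (0:ℝ) < Real.sqrt v := Real.sqrt_pos.mpr hvpos
  have h1 : (gaussianReal μ v).map (· + (-μ)) = gaussianReal 0 v := by
    rw [gaussianReal_map_add_const]; simp
  have h2 : (gaussianReal 0 v).map ((Real.sqrt v)⁻¹ * ·) = gaussianReal 0 1 := by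
    rw [gaussianReal_map_const_mul, mul_zero]
    congr 1
    refine NNReal.coe_injective ?_
    push_cast
    rw [inv_pow, Real.sq_sqrt hvpos.le]
    field_simp
  have e1 : gaussianReal μ v (Iic t) = gaussianReal 0 v (Iic (t - μ)) := by
    rw [← h1, Measure.map_apply (measurable_add_const _) measurableSet_Iic]
    congr 1
    ext x
    simp [sub_le_sub_iff_right, sub_eq_add_neg]
  have e2 : gaussianReal 0 v (Iic (t - μ)) =
      gaussianReal 0 1 (Iic ((t - μ) / Real.sqrt v)) := by
    rw [← h2, Measure.map_apply (measurable_const_mul _) measurableSet_Iic]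
    congr 1
    ext x
    simp only [mem_preimage, mem_Iic]
    rw [div_eq_inv_mul, mul_le_mul_iff_right₀ (inv_pos.mpr hσ)]
  rw [e1, e2]

/-- Lemma `lem:magic`, Equation (magic): if `Z_ℓ ~ N(-ℓ², 2ℓ²)` then
`E[1 ∧ e^{Z_ℓ}] = 2Φ(-ℓ/√2)`. -/
theorem stmt_1 {Ω : Type*} [MeasurableSpace Ω] (P : Measure Ω) [IsProbabilityMeasure P]
    (ℓ : ℝ) (hℓ : 0 < ℓ) (Z : Ω → ℝ) (hZmeas : Measurable Z)
    (hlaw : P.map Z = gaussianReal (-ℓ ^ 2) (Real.toNNReal (2 * ℓ ^ 2))) :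
    ∫ ω, min 1 (Real.exp (Z ω)) ∂P = 2 * stdGaussianCDF (-ℓ / Real.sqrt 2) := by
  set v : ℝ≥0 := Real.toNNReal (2 * ℓ ^ 2) with hvdef
  have hc : ((v : ℝ≥0) : ℝ) = 2 * ℓ ^ 2 := Real.coe_toNNReal _ (by positivity)
  have hvne : v ≠ 0 := by
    intro h
    have := hc
    rw [h] at this
    simp at this
    nlinarith
  -- the integrand
  set g : ℝ → ℝ := fun x => min 1 (rexp x) with hgdef
  have hgmeas : Measurable g := measurable_const.min Real.measurable_exp
  have hg0 : ∀ x, 0 ≤ g x := fun x => le_min zero_le_one (Real.exp_pos x).le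
  have hg1 : ∀ x, g x ≤ 1 := fun x => min_le_left _ _
  -- transport to the law
  have step1 : ∫ ω, min 1 (Real.exp (Z ω)) ∂P = ∫ x, g x ∂(gaussianReal (-ℓ ^ 2) v) := by
    rw [← hlaw]
    exact (integral_map hZmeas.aemeasurable hgmeas.aestronglyMeasurable).symm
  -- express as Lebesgue integral against the density
  set p : ℝ → ℝ := gaussianPDFReal (-ℓ ^ 2) v with hpdef
  set q : ℝ → ℝ := gaussianPDFReal (ℓ ^ 2) v with hqdef
  have step2 : ∫ x, g x ∂(gaussianReal (-ℓ ^ 2) v) = ∫ x, p x * g x := by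
    rw [gaussianReal_of_var_ne_zero _ hvne]
    have hh : gaussianPDF (-ℓ ^ 2) v = fun x => (((p x).toNNReal : ℝ≥0) : ℝ≥0∞) := rfl
    rw [hh, integral_withDensity_eq_integral_smul
      (f := fun x => (p x).toNNReal) ((measurable_gaussianPDFReal _ _).real_toNNReal) g]
    congr 1
    ext x
    rw [NNReal.smul_def, smul_eq_mul, Real.coe_toNNReal _ (gaussianPDFReal_nonneg _ _ _)]
  -- integrability
  have hint : Integrable (fun x => p x * g x) := by
    refine (integrable_gaussianPDFReal (-ℓ ^ 2) v).mono
      ((measurable_gaussianPDFReal _ _).mul hgmeas).aestronglyMeasurable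
      (ae_of_all _ fun x => ?_)
    rw [Real.norm_eq_abs, Real.norm_eq_abs, abs_of_nonneg (gaussianPDFReal_nonneg _ _ _),
      abs_of_nonneg (mul_nonneg (gaussianPDFReal_nonneg _ _ _) (hg0 x))]
    calc p x * g x ≤ p x * 1 :=
          mul_le_mul_of_nonneg_left (hg1 x) (gaussianPDFReal_nonneg _ _ _)
      _ = p x := mul_one _
  -- split the integral
  have step3 : ∫ x, p x * g x =
      (∫ x in Iic 0, p x * g x) + ∫ x in Ioi 0, p x * g x := by
    rw [← compl_Iic]
    exact (integral_add_compl measurableSet_Iic hint).symm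
  -- tilting identity
  have tilt : ∀ x, rexp x * p x = q x := by
    intro x
    simp only [hpdef, hqdef, gaussianPDFReal, hc]
    rw [mul_comm (rexp x), mul_assoc, ← Real.exp_add]
    congr 1
    field_simp
    ring
  -- left piece
  have left : ∫ x in Iic 0, p x * g x = ∫ x in Iic 0, q x := by
    refine setIntegral_congr_fun measurableSet_Iic fun x hx => ?_
    have hx' : rexp x ≤ 1 := Real.exp_le_one_iff.mpr hx
    rw [hgdef]
    simp only [min_eq_right hx']
    rw [mul_comm]
    exact tilt x
  -- right piece
  have symm : ∀ x : ℝ, q (-x) = p x := by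
    intro x
    simp only [hpdef, hqdef, gaussianPDFReal]
    congr 2
    ring
  have right : ∫ x in Ioi 0, p x * g x = ∫ x in Iic 0, q x := by
    have h1 : ∫ x in Ioi 0, p x * g x = ∫ x in Ioi 0, p x := by
      refine setIntegral_congr_fun measurableSet_Ioi fun x hx => ?_
      have : (1:ℝ) ≤ rexp x := Real.one_le_exp_iff.mpr (le_of_lt hx)
      rw [hgdef]
      simp [min_eq_left this]
    have h2 : ∫ x in Ioi 0, p x = ∫ x in Ioi 0, q (-x) := by
      simp_rw [symm]
    have h3 : (∫ x in Ioi 0, q (-x)) = ∫ x in Iic 0, q x := by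
      simpa using integral_comp_neg_Ioi 0 q
    rw [h1, h2, h3]
  -- identify the half-integral with the CDF
  have key : ∫ x in Iic 0, q x = stdGaussianCDF (-ℓ / Real.sqrt 2) := by
    have h1 : gaussianReal (ℓ ^ 2) v (Iic 0)
        = ENNReal.ofReal (∫ x in Iic 0, q x) :=
      gaussianReal_apply_eq_integral _ hvne _
    have harg : (0 - ℓ ^ 2) / Real.sqrt v = -ℓ / Real.sqrt 2 := by
      rw [hc]
      rw [show (2 : ℝ) * ℓ ^ 2 = 2 * ℓ ^ 2 from rfl]
      rw [Real.sqrt_mul (by norm_num : (0:ℝ) ≤ 2), Real.sqrt_sq hℓ.le]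
      have h2 : Real.sqrt 2 ≠ 0 := by positivity
      field_simp
      ring
    have h2 := my_gaussianReal_Iic (ℓ ^ 2) hvne 0
    rw [harg] at h2
    have h3 : stdGaussianCDF (-ℓ / Real.sqrt 2)
        = (gaussianReal 0 1 (Iic (-ℓ / Real.sqrt 2))).toReal := cdf_eq_real _ _
    rw [h3, ← h2, h1, ENNReal.toReal_ofReal]
    exact setIntegral_nonneg measurableSet_Iic fun x _ => gaussianPDFReal_nonneg _ _ _
  rw [step1, step2, step3, left, right, key]
  ring
end

section
/- Let z be a standard normal random variable (law N(0,1)), and let a, b be real constants with a ≠ 0. Then E[ z · min(1, e^{a z + b}) ] = a · exp(a²/2 + b) · Φ( -b/|a| - |a| ), where Φ denotes the cumulative distribution function of the standard normal distribution. -/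
open MeasureTheory ProbabilityTheory Real

namespace StdAux

open Set Filter Topology
open scoped ENNReal NNReal

lemma intG : Integrable (fun x : ℝ => Real.exp (-x^2/2)) := by
  have h : (fun x : ℝ => Real.exp (-x^2/2)) = fun x : ℝ => Real.exp (-(1/2 : ℝ) * x^2) := by
    funext x; congr 1; ring
  rw [h]
  exact integrable_exp_neg_mul_sq (by norm_num)

lemma intxG : Integrable (fun x : ℝ => x * Real.exp (-x^2/2)) := by
  have h : (fun x : ℝ => x * Real.exp (-x^2/2)) = fun x : ℝ => x * Real.exp (-(1/2 : ℝ) * x^2) := by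
    funext x; congr 2; ring
  rw [h]
  exact integrable_mul_exp_neg_mul_sq (by norm_num)

lemma hasDerivG (x : ℝ) :
    HasDerivAt (fun y : ℝ => -Real.exp (-y^2/2)) (x * Real.exp (-x^2/2)) x := by
  have h1 : HasDerivAt (fun y : ℝ => -y^2/2) (-x) x := by
    have := ((hasDerivAt_pow 2 x).neg).div_const 2
    refine this.congr_deriv ?_
    simp; ring
  have := (h1.exp).neg
  refine this.congr_deriv ?_
  ring

lemma tendsto_sq_atBot : Tendsto (fun x : ℝ => -x^2/2) atBot atBot := by
  have h1 : Tendsto (fun x : ℝ => x^2) atBot atTop := by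
    have := (tendsto_pow_atTop (n := 2) (by norm_num : (2:ℕ) ≠ 0)).comp
      (tendsto_abs_atBot_atTop (G := ℝ))
    simpa [Function.comp_def, sq_abs] using this
  have h2 : Tendsto (fun x : ℝ => -x^2) atBot atBot := tendsto_neg_atTop_atBot.comp h1
  exact h2.atBot_div_const two_pos

lemma tendsto_sq_atTop : Tendsto (fun x : ℝ => -x^2/2) atTop atBot := by
  have h1 : Tendsto (fun x : ℝ => x^2) atTop atTop := tendsto_pow_atTop (by norm_num : (2:ℕ) ≠ 0)
  have h2 : Tendsto (fun x : ℝ => -x^2) atTop atBot := tendsto_neg_atTop_atBot.comp h1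
  exact h2.atBot_div_const two_pos

lemma tendstoG_atBot : Tendsto (fun x : ℝ => -Real.exp (-x^2/2)) atBot (𝓝 0) := by
  have := (Real.tendsto_exp_atBot.comp tendsto_sq_atBot).neg
  simpa using this

lemma tendstoG_atTop : Tendsto (fun x : ℝ => -Real.exp (-x^2/2)) atTop (𝓝 0) := by
  have := (Real.tendsto_exp_atBot.comp tendsto_sq_atTop).neg
  simpa using this

lemma integral_Iic_xG (c : ℝ) :
    ∫ x in Iic c, x * Real.exp (-x^2/2) = -Real.exp (-c^2/2) := by
  have := integral_Iic_of_hasDerivAt_of_tendsto' (a := c)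
    (f := fun y : ℝ => -Real.exp (-y^2/2)) (f' := fun x : ℝ => x * Real.exp (-x^2/2))
    (fun x _ => hasDerivG x) intxG.integrableOn tendstoG_atBot
  simpa using this

lemma integral_Ioi_xG (c : ℝ) :
    ∫ x in Ioi c, x * Real.exp (-x^2/2) = Real.exp (-c^2/2) := by
  have := integral_Ioi_of_hasDerivAt_of_tendsto' (a := c)
    (f := fun y : ℝ => -Real.exp (-y^2/2)) (f' := fun x : ℝ => x * Real.exp (-x^2/2))
    (fun x _ => hasDerivG x) intxG.integrableOn tendstoG_atTop
  simpa using this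

lemma pdf_eq (x : ℝ) :
    gaussianPDFReal 0 1 x = (Real.sqrt (2*π))⁻¹ * Real.exp (-x^2/2) := by
  simp [gaussianPDFReal]

lemma cdf_eq (c : ℝ) :
    stdGaussianCDF c = (Real.sqrt (2*π))⁻¹ * ∫ x in Iic c, Real.exp (-x^2/2) := by
  rw [stdGaussianCDF, cdf_eq_real, measureReal_def, gaussianReal_apply_eq_integral 0 one_ne_zero,
    ENNReal.toReal_ofReal (integral_nonneg fun x => gaussianPDFReal_nonneg _ _ _)]
  rw [← integral_const_mul]
  exact setIntegral_congr_fun measurableSet_Iic fun x _ => pdf_eq x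

lemma integral_Iic_G (c : ℝ) :
    ∫ x in Iic c, Real.exp (-x^2/2) = Real.sqrt (2*π) * stdGaussianCDF c := by
  rw [cdf_eq]
  have h : Real.sqrt (2*π) ≠ 0 := by positivity
  field_simp

lemma intShift (a b : ℝ) :
    Integrable (fun x : ℝ => x * Real.exp (a*x+b) * Real.exp (-x^2/2)) := by
  have hg : Integrable (fun u : ℝ => (u + a) * Real.exp (-u^2/2)) :=
    (intxG.add (intG.const_mul a)).congr (Eventually.of_forall fun u => by simp only [Pi.add_apply]; ring)
  have key : ∀ x : ℝ, Real.exp (b + a^2/2) * ((x - a + a) * Real.exp (-(x-a)^2/2))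
      = x * Real.exp (a*x+b) * Real.exp (-x^2/2) := by
    intro x
    rw [sub_add_cancel, mul_assoc x, ← Real.exp_add, mul_left_comm, ← Real.exp_add]
    congr 2
    ring
  exact (((hg.comp_sub_right a).const_mul (Real.exp (b + a^2/2))).congr
    (Eventually.of_forall fun x => key x))

lemma intF (a b : ℝ) :
    Integrable (fun x : ℝ => x * min 1 (Real.exp (a*x+b)) * Real.exp (-x^2/2)) := by
  refine intxG.mono ?_ (Eventually.of_forall fun x => ?_)
  · exact (Continuous.aestronglyMeasurable (by fun_prop))
  · have h1 : |min 1 (Real.exp (a*x+b))| ≤ 1 := by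
      rw [abs_of_nonneg (le_min zero_le_one (Real.exp_pos _).le)]
      exact min_le_left _ _
    have h2 : (0:ℝ) ≤ Real.exp (-x^2/2) := (Real.exp_pos _).le
    simp only [norm_mul, Real.norm_eq_abs]
    calc |x| * |min 1 (Real.exp (a*x+b))| * |Real.exp (-x^2/2)|
        ≤ |x| * 1 * |Real.exp (-x^2/2)| := by gcongr
      _ = |x| * |Real.exp (-x^2/2)| := by ring

lemma shift_Iic (g : ℝ → ℝ) (t a : ℝ) :
    ∫ x in Iic t, g (x - a) = ∫ x in Iic (t - a), g x := by
  rw [← integral_indicator measurableSet_Iic, ← integral_indicator measurableSet_Iic]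
  have h : (Iic t).indicator (fun x => g (x - a)) =
      fun x => (Iic (t - a)).indicator g (x - a) := by
    funext x
    simp [indicator_apply, sub_le_sub_iff_right]
  rw [h]
  exact integral_sub_right_eq_self (fun x => (Iic (t - a)).indicator g x) a

lemma key_pos (a b : ℝ) (ha : 0 < a) :
    ∫ x, x * min 1 (Real.exp (a*x+b)) ∂(gaussianReal 0 1)
      = a * Real.exp (a^2/2 + b) * stdGaussianCDF (-b/a - a) := by
  set C : ℝ := (Real.sqrt (2*π))⁻¹ with hC
  set t : ℝ := -b/a with ht
  set s : ℝ := -b/a - a with hs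
  have hstep1 : ∫ x, x * min 1 (Real.exp (a*x+b)) ∂(gaussianReal 0 1)
      = ∫ x, (gaussianPDFReal 0 1 x).toNNReal • (x * min 1 (Real.exp (a*x+b))) := by
    rw [gaussianReal_of_var_ne_zero 0 one_ne_zero]
    have hpdf : gaussianPDF 0 1 = fun x => ((gaussianPDFReal 0 1 x).toNNReal : ℝ≥0∞) := by
      funext x; rfl
    rw [hpdf]
    exact integral_withDensity_eq_integral_smul
      ((measurable_gaussianPDFReal 0 1).real_toNNReal) _
  rw [hstep1]
  have hstep2 : ∀ x : ℝ, (gaussianPDFReal 0 1 x).toNNReal • (x * min 1 (Real.exp (a*x+b)))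
      = C * (x * min 1 (Real.exp (a*x+b)) * Real.exp (-x^2/2)) := by
    intro x
    rw [NNReal.smul_def, Real.coe_toNNReal _ (gaussianPDFReal_nonneg 0 1 x), pdf_eq,
      smul_eq_mul]
    ring
  simp_rw [hstep2]
  rw [integral_const_mul]
  rw [← intervalIntegral.integral_Iic_add_Ioi (b := t) (intF a b).integrableOn (intF a b).integrableOn]
  have hIic : ∫ x in Iic t, x * min 1 (Real.exp (a*x+b)) * Real.exp (-x^2/2)
      = Real.exp (b + a^2/2)
        * (-Real.exp (-s^2/2) + a * (Real.sqrt (2*π) * stdGaussianCDF s)) := by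
    have h1 : ∀ x ∈ Iic t, x * min 1 (Real.exp (a*x+b)) * Real.exp (-x^2/2)
        = Real.exp (b + a^2/2) * ((x - a + a) * Real.exp (-(x-a)^2/2)) := by
      intro x hx
      have hx' : a * x + b ≤ 0 := by
        rw [mem_Iic, ht] at hx
        have h := mul_le_mul_of_nonneg_left hx ha.le
        have : a * (-b/a) = -b := by field_simp
        nlinarith
      have hmin : min 1 (Real.exp (a*x+b)) = Real.exp (a*x+b) :=
        min_eq_right (Real.exp_le_one_iff.mpr hx')
      rw [hmin, sub_add_cancel, mul_assoc x, ← Real.exp_add, mul_left_comm, ← Real.exp_add]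
      congr 2
      ring
    rw [setIntegral_congr_fun measurableSet_Iic h1, integral_const_mul,
        shift_Iic (fun u => (u + a) * Real.exp (-u^2/2)) t a]
    have h2 : ∫ u in Iic (t - a), (u + a) * Real.exp (-u^2/2)
        = -Real.exp (-(t-a)^2/2) + a * (Real.sqrt (2*π) * stdGaussianCDF (t-a)) := by
      have hadd : ∀ u : ℝ, (u + a) * Real.exp (-u^2/2)
          = u * Real.exp (-u^2/2) + a * Real.exp (-u^2/2) := fun u => by ring
      simp_rw [hadd]
      rw [integral_add intxG.integrableOn (intG.const_mul a).integrableOn,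
          integral_Iic_xG, integral_const_mul, integral_Iic_G]
    rw [h2]
  have hIoi : ∫ x in Ioi t, x * min 1 (Real.exp (a*x+b)) * Real.exp (-x^2/2)
      = Real.exp (-t^2/2) := by
    have h1 : ∀ x ∈ Ioi t, x * min 1 (Real.exp (a*x+b)) * Real.exp (-x^2/2)
        = x * Real.exp (-x^2/2) := by
      intro x hx
      have hx' : (0:ℝ) ≤ a * x + b := by
        rw [mem_Ioi, ht] at hx
        have h := mul_le_mul_of_nonneg_left hx.le ha.le
        have : a * (-b/a) = -b := by field_simp
        nlinarith
      have hmin : min 1 (Real.exp (a*x+b)) = 1 :=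
        min_eq_left (Real.one_le_exp hx')
      rw [hmin, mul_one]
    rw [setIntegral_congr_fun measurableSet_Ioi h1, integral_Ioi_xG]
  rw [hIic, hIoi]
  have h1 : Real.exp (b + a^2/2) * Real.exp (-s^2/2) = Real.exp (-t^2/2) := by
    rw [← Real.exp_add]
    congr 1
    rw [hs, ht]
    field_simp
    ring
  have h2 : C * Real.sqrt (2*π) = 1 := by
    rw [hC]; exact inv_mul_cancel₀ (by positivity)
  calc C * (Real.exp (b + a^2/2)
          * (-Real.exp (-s^2/2) + a * (Real.sqrt (2*π) * stdGaussianCDF s))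
        + Real.exp (-t^2/2))
      = (C * Real.sqrt (2*π)) * (a * Real.exp (b + a^2/2) * stdGaussianCDF s)
        + C * (Real.exp (-t^2/2) - Real.exp (b + a^2/2) * Real.exp (-s^2/2)) := by ring
    _ = a * Real.exp (a^2/2 + b) * stdGaussianCDF s := by
        rw [h1, h2, sub_self, mul_zero, add_zero, one_mul, add_comm b (a^2/2)]

lemma key_neg (a b : ℝ) (ha : a < 0) :
    ∫ x, x * min 1 (Real.exp (a*x+b)) ∂(gaussianReal 0 1)
      = a * Real.exp (a^2/2 + b) * stdGaussianCDF (b/a + a) := by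
  have hmap : (gaussianReal 0 1).map (fun x : ℝ => -x) = gaussianReal 0 1 := by
    have h := gaussianReal_map_const_mul (μ := 0) (v := 1) (-1)
    have h1 : (fun x : ℝ => -1 * x) = fun x : ℝ => -x := by funext x; ring
    have h2 : (⟨(-1:ℝ)^2, sq_nonneg _⟩ : ℝ≥0) * 1 = 1 := by
      ext; push_cast; norm_num
    rw [h1] at h
    simpa using h
  have hcont : Continuous (fun x : ℝ => x * min 1 (Real.exp (a*x+b))) := by fun_prop
  have hstep : ∫ x, x * min 1 (Real.exp (a*x+b)) ∂(gaussianReal 0 1)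
      = ∫ x, (-x) * min 1 (Real.exp (a*(-x)+b)) ∂(gaussianReal 0 1) := by
    conv_lhs => rw [← hmap]
    rw [integral_map measurable_neg.aemeasurable hcont.aestronglyMeasurable]
  rw [hstep]
  have hre : ∀ x : ℝ, (-x) * min 1 (Real.exp (a*(-x)+b))
      = -(x * min 1 (Real.exp ((-a)*x+b))) := by
    intro x
    have : a * (-x) + b = (-a)*x + b := by ring
    rw [this]; ring
  simp_rw [hre]
  rw [integral_neg, key_pos (-a) b (by linarith)]
  have harg : -b/(-a) - (-a) = b/a + a := by
    rw [neg_div_neg_eq, sub_neg_eq_add]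
  rw [harg]
  have : (-a)^2 = a^2 := by ring
  rw [this]
  ring

end StdAux

/-- Lemma `lem:magic`, Equation (normmo): for `z ~ N(0,1)` and reals `a ≠ 0`, `b`,
`E[z (1 ∧ e^{az+b})] = a exp(a²/2 + b) Φ(-b/|a| - |a|)`. -/
theorem stmt_2 {Ω : Type*} [MeasurableSpace Ω] (P : Measure Ω) [IsProbabilityMeasure P]
    (z : Ω → ℝ) (hzmeas : Measurable z) (hlaw : P.map z = gaussianReal 0 1)
    (a b : ℝ) (ha : a ≠ 0) :
    ∫ ω, z ω * min 1 (Real.exp (a * z ω + b)) ∂P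
      = a * Real.exp (a ^ 2 / 2 + b) * stdGaussianCDF (-b / |a| - |a|) := by
  have hcont : Continuous (fun x : ℝ => x * min 1 (Real.exp (a*x+b))) := by fun_prop
  have hstep : ∫ ω, z ω * min 1 (Real.exp (a * z ω + b)) ∂P
      = ∫ x, x * min 1 (Real.exp (a*x+b)) ∂(gaussianReal 0 1) := by
    rw [← hlaw, integral_map hzmeas.aemeasurable hcont.aestronglyMeasurable]
  rw [hstep]
  rcases lt_or_gt_of_ne ha with h | h
  · rw [StdAux.key_neg a b h, abs_of_neg h, neg_div_neg_eq, sub_neg_eq_add]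
  · rw [StdAux.key_pos a b h, abs_of_pos h]
end

section
/- Let μ and ν be Borel probability measures on ℝ. Suppose ν is absolutely continuous with respect to Lebesgue measure with a density bounded almost everywhere by a constant M > 0. Suppose W ≥ 0 is such that for every L > 0 and every L-Lipschitz function g : ℝ → ℝ (with values in [0,1]), |∫ g dμ − ∫ g dν| ≤ L · W. Then the Kolmogorov–Smirnov distance satisfies sup_{t∈ℝ} |μ((-∞, t]) − ν((-∞, t])| ≤ √(4 M W). -/
open MeasureTheory

noncomputable def gfun (s ε : ℝ) (x : ℝ) : ℝ := max 0 (min 1 ((s + ε - x) / ε))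

lemma gfun_mem (s ε x : ℝ) : gfun s ε x ∈ Set.Icc (0:ℝ) 1 := by
  constructor
  · exact le_max_left _ _
  · simp [gfun]

lemma gfun_lip (s ε : ℝ) (hε : 0 < ε) :
    LipschitzWith (Real.toNNReal (1/ε)) (gfun s ε) := by
  rw [lipschitzWith_iff_dist_le_mul]
  intro x y
  have hco : ((Real.toNNReal (1/ε) : NNReal) : ℝ) = 1/ε :=
    Real.coe_toNNReal _ (by positivity)
  rw [Real.dist_eq, Real.dist_eq, hco]
  have h1 : |gfun s ε x - gfun s ε y| ≤ |(s + ε - x)/ε - (s + ε - y)/ε| := by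
    refine (abs_max_sub_max_le_max 0 _ 0 _).trans ?_
    rw [sub_self, abs_zero, max_le_iff]
    refine ⟨abs_nonneg _, ?_⟩
    refine (abs_min_sub_min_le_max 1 _ 1 _).trans ?_
    rw [sub_self, abs_zero, max_le_iff]
    exact ⟨abs_nonneg _, le_refl _⟩
  refine h1.trans (le_of_eq ?_)
  rw [div_sub_div_same, abs_div, abs_of_pos hε,
      show s + ε - x - (s + ε - y) = -(x - y) by ring, abs_neg, one_div, inv_mul_eq_div]

lemma gfun_one (s ε x : ℝ) (hε : 0 < ε) (hx : x ≤ s) : gfun s ε x = 1 := by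
  have : (1:ℝ) ≤ (s + ε - x)/ε := by
    rw [le_div_iff₀ hε]; linarith
  simp [gfun, min_eq_left this]

lemma gfun_zero (s ε x : ℝ) (hε : 0 < ε) (hx : s + ε ≤ x) : gfun s ε x = 0 := by
  have : (s + ε - x)/ε ≤ 0 := div_nonpos_of_nonpos_of_nonneg (by linarith) hε.le
  have h2 : min 1 ((s + ε - x)/ε) ≤ 0 := le_trans (min_le_right _ _) this
  simp [gfun, max_eq_left h2]

lemma gfun_integrable (s ε : ℝ) (hε : 0 < ε) (μ : Measure ℝ) [IsProbabilityMeasure μ] :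
    Integrable (gfun s ε) μ := by
  refine (integrable_const (1:ℝ)).mono' ((gfun_lip s ε hε).continuous.aestronglyMeasurable) ?_
  filter_upwards with x
  rw [Real.norm_eq_abs, abs_of_nonneg (gfun_mem s ε x).1]
  exact (gfun_mem s ε x).2

lemma gfun_lower (s ε : ℝ) (hε : 0 < ε) (μ : Measure ℝ) [IsProbabilityMeasure μ] :
    (μ (Set.Iic s)).toReal ≤ ∫ x, gfun s ε x ∂μ := by
  have h : (μ (Set.Iic s)).toReal = ∫ x, (Set.Iic s).indicator (1 : ℝ → ℝ) x ∂μ := by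
    rw [integral_indicator_one measurableSet_Iic]; rfl
  rw [h]
  refine integral_mono ((integrable_const (1:ℝ)).indicator measurableSet_Iic)
    (gfun_integrable s ε hε μ) ?_
  intro x
  by_cases hx : x ≤ s
  · simp only [Set.indicator_of_mem (Set.mem_Iic.mpr hx)]
    exact le_of_eq (gfun_one s ε x hε hx).symm
  · simp only [Set.indicator_of_notMem (by simpa using hx : x ∉ Set.Iic s)]
    exact (gfun_mem s ε x).1

lemma gfun_upper (s ε : ℝ) (hε : 0 < ε) (μ : Measure ℝ) [IsProbabilityMeasure μ] :
    ∫ x, gfun s ε x ∂μ ≤ (μ (Set.Iic (s + ε))).toReal := by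
  have h : (μ (Set.Iic (s+ε))).toReal = ∫ x, (Set.Iic (s+ε)).indicator (1 : ℝ → ℝ) x ∂μ := by
    rw [integral_indicator_one measurableSet_Iic]; rfl
  rw [h]
  refine integral_mono (gfun_integrable s ε hε μ)
    ((integrable_const (1:ℝ)).indicator measurableSet_Iic) ?_
  intro x
  by_cases hx : x ≤ s + ε
  · simp only [Set.indicator_of_mem (Set.mem_Iic.mpr hx)]
    exact (gfun_mem s ε x).2
  · simp only [Set.indicator_of_notMem (by simpa using hx : x ∉ Set.Iic (s+ε))]
    exact le_of_eq (gfun_zero s ε x hε (by linarith))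

/-- Lemma `lem:kswass`: if `ν` has a Lebesgue density bounded a.e. by `M > 0`
and the 1-Wasserstein distance between `μ` and `ν` is at most `W` (expressed
via Lipschitz test functions with values in `[0,1]`), then the
Kolmogorov–Smirnov distance satisfies `KS(μ,ν) ≤ √(4MW)`. -/
theorem stmt_7 (μ ν : Measure ℝ) [IsProbabilityMeasure μ] [IsProbabilityMeasure ν]
    (M W : ℝ) (hM : 0 < M) (hW : 0 ≤ W)
    (hac : ν ≪ volume)
    (hdens : ∀ᵐ x ∂(volume : Measure ℝ), ν.rnDeriv volume x ≤ ENNReal.ofReal M)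
    (hWass : ∀ L : ℝ, 0 < L → ∀ g : ℝ → ℝ, LipschitzWith (Real.toNNReal L) g →
      (∀ x, g x ∈ Set.Icc (0 : ℝ) 1) →
      |(∫ x, g x ∂μ) - ∫ x, g x ∂ν| ≤ L * W) :
    ∀ t : ℝ, |(μ (Set.Iic t)).toReal - (ν (Set.Iic t)).toReal| ≤ Real.sqrt (4 * M * W) := by
  intro t
  -- Step 1: density bound on intervals
  have hband : ∀ a ε : ℝ, 0 < ε → (ν (Set.Iic (a + ε))).toReal - (ν (Set.Iic a)).toReal ≤ M * ε := by
    intro a ε hε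
    have hunion : Set.Iic a ∪ Set.Ioc a (a + ε) = Set.Iic (a + ε) :=
      Set.Iic_union_Ioc_eq_Iic (by linarith)
    have hdisj : Disjoint (Set.Iic a) (Set.Ioc a (a + ε)) := by
      simp [Set.disjoint_left]
      intro x hx; exact fun h => absurd h (not_lt.mpr hx)
    have hsum : ν (Set.Iic (a + ε)) = ν (Set.Iic a) + ν (Set.Ioc a (a + ε)) := by
      rw [← hunion, measure_union hdisj measurableSet_Ioc]
    have hIoc : ν (Set.Ioc a (a + ε)) ≤ ENNReal.ofReal (M * ε) := by
      rw [← Measure.setLIntegral_rnDeriv hac (Set.Ioc a (a + ε))]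
      calc ∫⁻ x in Set.Ioc a (a+ε), ν.rnDeriv volume x ∂volume
          ≤ ∫⁻ _ in Set.Ioc a (a+ε), ENNReal.ofReal M ∂volume := by
            refine lintegral_mono_ae ?_
            exact ae_restrict_of_ae hdens
        _ = ENNReal.ofReal M * volume (Set.Ioc a (a+ε)) := by
            rw [setLIntegral_const]
        _ = ENNReal.ofReal (M * ε) := by
            rw [Real.volume_Ioc, ENNReal.ofReal_mul hM.le]
            congr 1
            congr 1
            ring
    have h1 : ν (Set.Iic (a + ε)) ≤ ν (Set.Iic a) + ENNReal.ofReal (M * ε) := by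
      rw [hsum]; exact add_le_add_right hIoc _
    have hfin : ν (Set.Iic a) ≠ ⊤ := measure_ne_top _ _
    have := ENNReal.toReal_mono (by finiteness) h1
    rw [ENNReal.toReal_add hfin ENNReal.ofReal_ne_top,
      ENNReal.toReal_ofReal (by positivity)] at this
    linarith
  -- Step 2: key bound for every ε > 0
  have key : ∀ ε : ℝ, 0 < ε →
      |(μ (Set.Iic t)).toReal - (ν (Set.Iic t)).toReal| ≤ M * ε + W / ε := by
    intro ε hε
    have hLpos : (0:ℝ) < 1/ε := by positivity
    rw [abs_le]
    constructor
    · -- ν(Iic t) - μ(Iic t) ≤ Mε + W/ε via g at s = t - ε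
      have hW1 := hWass (1/ε) hLpos (gfun (t-ε) ε) (gfun_lip (t-ε) ε hε) (gfun_mem (t-ε) ε)
      have h1 := gfun_lower (t-ε) ε hε ν
      have h2 := gfun_upper (t-ε) ε hε μ
      have h3 := hband (t-ε) ε hε
      rw [abs_le] at hW1
      have hte : t - ε + ε = t := by ring
      rw [hte] at h2 h3
      rw [one_div, ← div_eq_inv_mul] at hW1
      linarith [hW1.1]
    · -- μ(Iic t) - ν(Iic t) ≤ Mε + W/ε via g at s = t
      have hW1 := hWass (1/ε) hLpos (gfun t ε) (gfun_lip t ε hε) (gfun_mem t ε)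
      have h1 := gfun_lower t ε hε μ
      have h2 := gfun_upper t ε hε ν
      have h3 := hband t ε hε
      rw [abs_le] at hW1
      rw [one_div, ← div_eq_inv_mul] at hW1
      linarith [hW1.2]
  -- Step 3: optimize
  rcases eq_or_lt_of_le hW with hW0 | hWpos
  · -- W = 0
    have hle : |(μ (Set.Iic t)).toReal - (ν (Set.Iic t)).toReal| ≤ 0 := by
      refine le_of_forall_pos_le_add ?_
      intro δ hδ
      have := key (δ/M) (by positivity)
      rw [← hW0] at this
      simp only [zero_div] at this
      calc |(μ (Set.Iic t)).toReal - (ν (Set.Iic t)).toReal| ≤ M * (δ/M) + 0 := this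
        _ ≤ 0 + δ := by rw [mul_div_cancel₀ _ hM.ne']; linarith
    refine hle.trans (Real.sqrt_nonneg _)
  · -- W > 0
    set s := Real.sqrt (W/M) with hs
    have hspos : 0 < s := Real.sqrt_pos.mpr (by positivity)
    have hs2 : s^2 = W/M := Real.sq_sqrt (by positivity)
    have hMs : M * s^2 = W := by rw [hs2]; field_simp
    have hsum : M * s + W / s = 2 * M * s := by
      rw [← hMs]; field_simp; ring
    have hfin : M * s + W / s = Real.sqrt (4 * M * W) := by
      rw [hsum]
      have h4 : 4 * M * W = (2 * M * s)^2 := by nlinarith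
      rw [h4, Real.sqrt_sq (by positivity)]
    rw [← hfin]
    exact key s hspos
end

section
/- There exists a constant M > 0, depending only on ℓ, such that for every N ∈ ℕ, every ζ ∈ ℝ^N and every index 1 ≤ i ≤ N: for every 1-Lipschitz function f : ℝ → ℝ, |E[f(R(ζ,ξ))] − E[f(R_i(ζ,ξ))]| ≤ (M/√N)(1 + |ζ_i|). That is, Wass(R(ζ,ξ), R_i(ζ,ξ)) ≤ (M/√N)(|ζ_i| + 1). -/
open MeasureTheory ProbabilityTheory

/-- The joint law of `N` i.i.d. standard normal random variables `ξ = (ξ₁,…,ξ_N)`. -/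
noncomputable def gaussPi (N : ℕ) : Measure (Fin N → ℝ) :=
  Measure.pi fun _ => ProbabilityTheory.gaussianReal 0 1

instance (N : ℕ) : IsProbabilityMeasure (gaussPi N) := by
  unfold gaussPi; infer_instance

lemma aux_map_eval (N : ℕ) (i : Fin N) :
    (gaussPi N).map (fun ξ => ξ i) = gaussianReal 0 1 := by
  refine Measure.ext fun s hs => ?_
  rw [Measure.map_apply (measurable_pi_apply i) hs]
  have h1 : (fun ξ : Fin N → ℝ => ξ i) ⁻¹' s
      = Set.pi Set.univ (Function.update (fun _ : Fin N => (Set.univ : Set ℝ)) i s) := by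
    rw [Set.eval_preimage]
  rw [h1, gaussPi, Measure.pi_pi]
  rw [Finset.prod_eq_single i (fun j _ hj => by simp [Function.update_of_ne hj])
    (fun h => absurd (Finset.mem_univ i) h)]
  simp

lemma aux_integrable_eval (N : ℕ) (i : Fin N) {g : ℝ → ℝ}
    (hg : Integrable g (gaussianReal 0 1)) :
    Integrable (fun ξ : Fin N → ℝ => g (ξ i)) (gaussPi N) := by
  have h : AEStronglyMeasurable g ((gaussPi N).map fun ξ => ξ i) := by
    rw [aux_map_eval]; exact hg.aestronglyMeasurable
  have := (integrable_map_measure h (measurable_pi_apply i).aemeasurable).mp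
    (by rwa [aux_map_eval])
  exact this

lemma aux_integral_eval (N : ℕ) (i : Fin N) {g : ℝ → ℝ}
    (hg : AEStronglyMeasurable g (gaussianReal 0 1)) :
    ∫ ξ, g (ξ i) ∂(gaussPi N) = ∫ x, g x ∂(gaussianReal 0 1) := by
  have h : AEStronglyMeasurable g ((gaussPi N).map fun ξ => ξ i) := by
    rw [aux_map_eval]; exact hg
  rw [← aux_map_eval N i, integral_map (measurable_pi_apply i).aemeasurable h]

lemma aux_int_sq : Integrable (fun x : ℝ => x ^ 2) (gaussianReal 0 1) := by
  rw [gaussianReal_of_var_ne_zero 0 one_ne_zero,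
    integrable_withDensity_iff (measurable_gaussianPDF 0 1)
      (ae_of_all _ fun x => ENNReal.ofReal_lt_top)]
  have h := integrable_rpow_mul_exp_neg_mul_sq (by norm_num : (0:ℝ) < 1/2)
    (by norm_num : (-1:ℝ) < 2)
  rw [show ((2:ℝ)) = ((2:ℕ):ℝ) by norm_num] at h
  simp_rw [Real.rpow_natCast] at h
  have heq : (fun x : ℝ => x ^ 2 * (gaussianPDF 0 1 x).toReal)
      = fun x => (Real.sqrt (2 * Real.pi * ((1:NNReal):ℝ)))⁻¹ *
          (x ^ 2 * Real.exp (-(1/2) * x ^ 2)) := by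
    funext x
    rw [gaussianPDF, ENNReal.toReal_ofReal (gaussianPDFReal_nonneg _ _ _), gaussianPDFReal]
    have : -(x - 0)^2 / (2 * ((1:NNReal):ℝ)) = -(1/2) * x^2 := by push_cast; ring
    rw [this]; ring
  rw [heq]
  exact h.const_mul _

lemma aux_int_abs : Integrable (fun x : ℝ => |x|) (gaussianReal 0 1) := by
  refine ((integrable_const (1:ℝ)).add aux_int_sq).mono' ?_ ?_
  · exact (continuous_abs.measurable).aestronglyMeasurable
  · filter_upwards with x
    simp only [Pi.add_apply]
    rw [Real.norm_eq_abs, abs_abs]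
    nlinarith [sq_nonneg (|x| - 1), sq_abs x]

lemma aux_int_f (ℓ : ℝ) (N : ℕ) (ζ : Fin N → ℝ) (s : Finset (Fin N))
    (f : ℝ → ℝ) (hf : LipschitzWith 1 f) :
    Integrable (fun ξ : Fin N → ℝ =>
      f (-Real.sqrt (2 * ℓ ^ 2 / N) * ∑ j ∈ s, ζ j * ξ j
        - ℓ ^ 2 / N * ∑ j ∈ s, ξ j ^ 2)) (gaussPi N) := by
  set c := Real.sqrt (2 * ℓ ^ 2 / N) with hc
  have hc0 : 0 ≤ c := Real.sqrt_nonneg _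
  by_cases hd0 : (0:ℝ) ≤ ℓ ^ 2 / N
  swap
  · exact absurd (by positivity) hd0
  have hG : Integrable (fun ξ : Fin N → ℝ =>
      |f 0| + (c * ∑ j ∈ s, |ζ j| * |ξ j| + ℓ ^ 2 / N * ∑ j ∈ s, ξ j ^ 2)) (gaussPi N) := by
    refine (integrable_const _).add (Integrable.add ?_ ?_)
    · exact (integrable_finset_sum s fun j _ =>
        (aux_integrable_eval N j aux_int_abs).const_mul (|ζ j|)).const_mul c
    · exact (integrable_finset_sum s fun j _ =>
        aux_integrable_eval N j aux_int_sq).const_mul _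
  refine hG.mono' ?_ ?_
  · refine (hf.continuous.measurable.comp ?_).aestronglyMeasurable
    fun_prop
  · filter_upwards with ξ
    rw [Real.norm_eq_abs]
    set R := -c * ∑ j ∈ s, ζ j * ξ j - ℓ ^ 2 / N * ∑ j ∈ s, ξ j ^ 2 with hR
    have h1 : |f R| ≤ |f 0| + |R| := by
      have := hf.dist_le_mul R 0
      simp only [Real.dist_eq, NNReal.coe_one, one_mul, sub_zero] at this
      calc |f R| = |f 0 + (f R - f 0)| := by ring_nf
        _ ≤ |f 0| + |f R - f 0| := abs_add_le _ _
        _ ≤ |f 0| + |R| := by linarith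
    have h2 : |R| ≤ c * ∑ j ∈ s, |ζ j| * |ξ j| + ℓ ^ 2 / N * ∑ j ∈ s, ξ j ^ 2 := by
      have hsum : |∑ j ∈ s, ζ j * ξ j| ≤ ∑ j ∈ s, |ζ j| * |ξ j| := by
        refine (Finset.abs_sum_le_sum_abs _ _).trans ?_
        simp [abs_mul, le_refl]
      have hsq : (0:ℝ) ≤ ∑ j ∈ s, ξ j ^ 2 :=
        Finset.sum_nonneg fun j _ => sq_nonneg _
      calc |R| ≤ |(-c) * ∑ j ∈ s, ζ j * ξ j| + |ℓ ^ 2 / N * ∑ j ∈ s, ξ j ^ 2| :=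
            abs_sub _ _
        _ = c * |∑ j ∈ s, ζ j * ξ j| + ℓ ^ 2 / N * ∑ j ∈ s, ξ j ^ 2 := by
            rw [abs_mul, abs_mul, abs_neg, abs_of_nonneg hc0, abs_of_nonneg hd0,
              abs_of_nonneg hsq]
        _ ≤ c * ∑ j ∈ s, |ζ j| * |ξ j| + ℓ ^ 2 / N * ∑ j ∈ s, ξ j ^ 2 := by
            have := mul_le_mul_of_nonneg_left hsum hc0
            linarith
    linarith

/-- `R(ζ,ξ) = −√(2ℓ²/N) Σ_j ζ_j ξ_j − (ℓ²/N) Σ_j ξ_j²`. -/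
noncomputable def Rfun (ℓ : ℝ) (N : ℕ) (ζ ξ : Fin N → ℝ) : ℝ :=
  -Real.sqrt (2 * ℓ ^ 2 / N) * ∑ j, ζ j * ξ j - ℓ ^ 2 / N * ∑ j, ξ j ^ 2

/-- `R_i(ζ,ξ) = −√(2ℓ²/N) Σ_{j≠i} ζ_j ξ_j − (ℓ²/N) Σ_{j≠i} ξ_j²`. -/
noncomputable def Rifun (ℓ : ℝ) (N : ℕ) (ζ ξ : Fin N → ℝ) (i : Fin N) : ℝ :=
  -Real.sqrt (2 * ℓ ^ 2 / N) * ∑ j ∈ Finset.univ.erase i, ζ j * ξ j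
    - ℓ ^ 2 / N * ∑ j ∈ Finset.univ.erase i, ξ j ^ 2

/-- `R_{ij}(ζ,ξ) = −√(2ℓ²/N) Σ_{k∉{i,j}} ζ_k ξ_k − (ℓ²/N) Σ_{k∉{i,j}} ξ_k²`. -/
noncomputable def Rijfun (ℓ : ℝ) (N : ℕ) (ζ ξ : Fin N → ℝ) (i j : Fin N) : ℝ :=
  -Real.sqrt (2 * ℓ ^ 2 / N) * ∑ k ∈ (Finset.univ.erase i).erase j, ζ k * ξ k
    - ℓ ^ 2 / N * ∑ k ∈ (Finset.univ.erase i).erase j, ξ k ^ 2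

/-- Lemma `lem:wass2`, Equation `eqn:estst1`: there is a constant `M > 0`
depending only on `ℓ` such that for all `N`, `ζ ∈ ℝ^N` and `1 ≤ i ≤ N`,
`Wass(R(ζ,ξ), R_i(ζ,ξ)) ≤ (M/√N)(|ζ_i| + 1)`, the Wasserstein distance being
expressed via 1-Lipschitz test functions. -/
theorem stmt_12 (ℓ : ℝ) (hℓ : 0 < ℓ) :
    ∃ M : ℝ, 0 < M ∧
      ∀ N : ℕ, 0 < N → ∀ ζ : Fin N → ℝ, ∀ i : Fin N, ∀ f : ℝ → ℝ, LipschitzWith 1 f →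
        |(∫ ξ, f (Rfun ℓ N ζ ξ) ∂gaussPi N) - ∫ ξ, f (Rifun ℓ N ζ ξ i) ∂gaussPi N|
          ≤ M / Real.sqrt N * (1 + |ζ i|) := by
  set C1 : ℝ := ∫ x, |x| ∂(gaussianReal 0 1) with hC1def
  set C2 : ℝ := ∫ x, x ^ 2 ∂(gaussianReal 0 1) with hC2def
  have hC1 : 0 ≤ C1 := integral_nonneg fun x => abs_nonneg x
  have hC2 : 0 ≤ C2 := integral_nonneg fun x => sq_nonneg x
  have hs2 : (0:ℝ) < Real.sqrt 2 := Real.sqrt_pos.mpr (by norm_num)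
  refine ⟨Real.sqrt 2 * ℓ * (C1 + 1) + ℓ ^ 2 * (C2 + 1), ?_, ?_⟩
  · have h1 : 0 < Real.sqrt 2 * ℓ * (C1 + 1) :=
      mul_pos (mul_pos hs2 hℓ) (by linarith)
    have h2 : 0 < ℓ ^ 2 * (C2 + 1) := mul_pos (pow_pos hℓ 2) (by linarith)
    linarith
  intro N hN ζ i f hf
  have hN' : (0:ℝ) < N := Nat.cast_pos.mpr hN
  have hsN : (0:ℝ) < Real.sqrt N := Real.sqrt_pos.mpr hN'
  have hNs : Real.sqrt N ≤ N := by
    calc Real.sqrt N ≤ Real.sqrt ((N:ℝ) ^ 2) :=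
          Real.sqrt_le_sqrt (by nlinarith [(Nat.one_le_cast.mpr hN : (1:ℝ) ≤ N)])
      _ = N := Real.sqrt_sq hN'.le
  set c := Real.sqrt (2 * ℓ ^ 2 / N) with hcdef
  have hc0 : 0 ≤ c := Real.sqrt_nonneg _
  have hd0 : (0:ℝ) ≤ ℓ ^ 2 / N := by positivity
  have hc : c = Real.sqrt 2 * ℓ / Real.sqrt N := by
    rw [hcdef, show (2 * ℓ ^ 2 / N : ℝ) = (Real.sqrt 2 * ℓ / Real.sqrt N) ^ 2 by
      rw [div_pow, mul_pow, Real.sq_sqrt (by norm_num : (0:ℝ) ≤ 2),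
        Real.sq_sqrt hN'.le]]
    exact Real.sqrt_sq (by positivity)
  -- integrability of the two compositions
  have hIntR : Integrable (fun ξ => f (Rfun ℓ N ζ ξ)) (gaussPi N) := by
    have := aux_int_f ℓ N ζ Finset.univ f hf
    exact this
  have hIntRi : Integrable (fun ξ => f (Rifun ℓ N ζ ξ i)) (gaussPi N) := by
    have := aux_int_f ℓ N ζ (Finset.univ.erase i) f hf
    exact this
  -- pointwise difference
  have hdiff : ∀ ξ : Fin N → ℝ,
      Rfun ℓ N ζ ξ - Rifun ℓ N ζ ξ i = -c * (ζ i * ξ i) - ℓ ^ 2 / N * ξ i ^ 2 := by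
    intro ξ
    rw [Rfun, Rifun,
      ← Finset.add_sum_erase Finset.univ (fun j => ζ j * ξ j) (Finset.mem_univ i),
      ← Finset.add_sum_erase Finset.univ (fun j => ξ j ^ 2) (Finset.mem_univ i)]
    ring
  -- the integrable bound function
  have hbInt : Integrable (fun ξ : Fin N → ℝ =>
      c * |ζ i| * |ξ i| + ℓ ^ 2 / N * ξ i ^ 2) (gaussPi N) :=
    ((aux_integrable_eval N i aux_int_abs).const_mul _).add
      ((aux_integrable_eval N i aux_int_sq).const_mul _)
  have key : |(∫ ξ, f (Rfun ℓ N ζ ξ) ∂gaussPi N) - ∫ ξ, f (Rifun ℓ N ζ ξ i) ∂gaussPi N|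
      ≤ c * |ζ i| * C1 + ℓ ^ 2 / N * C2 := by
    rw [← integral_sub hIntR hIntRi]
    calc |∫ ξ, (f (Rfun ℓ N ζ ξ) - f (Rifun ℓ N ζ ξ i)) ∂gaussPi N|
        ≤ ∫ ξ, |f (Rfun ℓ N ζ ξ) - f (Rifun ℓ N ζ ξ i)| ∂gaussPi N := by
          simpa [Real.norm_eq_abs] using
            norm_integral_le_integral_norm (μ := gaussPi N)
              (f := fun ξ => f (Rfun ℓ N ζ ξ) - f (Rifun ℓ N ζ ξ i))
      _ ≤ ∫ ξ, (c * |ζ i| * |ξ i| + ℓ ^ 2 / N * ξ i ^ 2) ∂gaussPi N := by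
          refine integral_mono (hIntR.sub hIntRi).abs hbInt fun ξ => ?_
          have hl := hf.dist_le_mul (Rfun ℓ N ζ ξ) (Rifun ℓ N ζ ξ i)
          simp only [Real.dist_eq, NNReal.coe_one, one_mul] at hl
          rw [hdiff ξ] at hl
          have h2 : |(-c) * (ζ i * ξ i) - ℓ ^ 2 / N * ξ i ^ 2|
              ≤ c * |ζ i| * |ξ i| + ℓ ^ 2 / N * ξ i ^ 2 := by
            calc |(-c) * (ζ i * ξ i) - ℓ ^ 2 / N * ξ i ^ 2|
                ≤ |(-c) * (ζ i * ξ i)| + |ℓ ^ 2 / N * ξ i ^ 2| := abs_sub _ _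
              _ = c * |ζ i| * |ξ i| + ℓ ^ 2 / N * ξ i ^ 2 := by
                  rw [abs_mul, abs_mul, abs_mul, abs_neg, abs_of_nonneg hc0,
                    abs_of_nonneg hd0, abs_of_nonneg (sq_nonneg (ξ i))]
                  ring
          linarith [hl, h2]
      _ = c * |ζ i| * C1 + ℓ ^ 2 / N * C2 := by
          rw [integral_add ((aux_integrable_eval N i aux_int_abs).const_mul _)
            ((aux_integrable_eval N i aux_int_sq).const_mul _),
            integral_const_mul, integral_const_mul,
            aux_integral_eval N i (continuous_abs.measurable).aestronglyMeasurable,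
            aux_integral_eval N i (by fun_prop : AEStronglyMeasurable (fun x : ℝ => x ^ 2)
              (gaussianReal 0 1))]
  refine key.trans ?_
  rw [hc]
  have hz : (0:ℝ) ≤ |ζ i| := abs_nonneg _
  have e1 : Real.sqrt 2 * ℓ / Real.sqrt N * |ζ i| * C1
      ≤ Real.sqrt 2 * ℓ * (C1 + 1) * |ζ i| / Real.sqrt N := by
    rw [div_mul_eq_mul_div, div_mul_eq_mul_div, div_le_div_iff₀ hsN hsN]
    nlinarith [mul_nonneg (mul_nonneg (mul_nonneg hs2.le hℓ.le) hz) hsN.le,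
      mul_nonneg (mul_nonneg (mul_nonneg (mul_nonneg hs2.le hℓ.le) hz) hC1) hsN.le]
  have e2 : ℓ ^ 2 / N * C2 ≤ ℓ ^ 2 * (C2 + 1) / Real.sqrt N := by
    rw [div_mul_eq_mul_div, div_le_div_iff₀ hN' hsN]
    nlinarith [mul_nonneg (mul_nonneg (sq_nonneg ℓ) hC2) (sub_nonneg.mpr hNs),
      mul_pos (pow_pos hℓ 2) hN']
  calc Real.sqrt 2 * ℓ / Real.sqrt N * |ζ i| * C1 + ℓ ^ 2 / N * C2
      ≤ Real.sqrt 2 * ℓ * (C1 + 1) * |ζ i| / Real.sqrt N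
        + ℓ ^ 2 * (C2 + 1) / Real.sqrt N := add_le_add e1 e2
    _ = (Real.sqrt 2 * ℓ * (C1 + 1) * |ζ i| + ℓ ^ 2 * (C2 + 1)) / Real.sqrt N :=
        by rw [← add_div]
    _ ≤ (Real.sqrt 2 * ℓ * (C1 + 1) + ℓ ^ 2 * (C2 + 1)) / Real.sqrt N * (1 + |ζ i|) := by
        rw [div_mul_eq_mul_div, div_le_div_iff₀ hsN hsN]
        nlinarith [mul_pos (mul_pos hs2 hℓ) (show (0:ℝ) < C1 + 1 by linarith),
          mul_nonneg (mul_nonneg (mul_pos (pow_pos hℓ 2)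
            (show (0:ℝ) < C2 + 1 by linarith)).le hz) (mul_pos hsN hsN).le,
          mul_pos (mul_pos (mul_pos hs2 hℓ) (show (0:ℝ) < C1 + 1 by linarith))
            (mul_pos hsN hsN)]
end

section
/- Let ξ be a standard normal random variable, let S be a real random variable independent of ξ with E[e^S] < ∞, and let c ≠ 0 be a real constant. Then E[ ξ · min(1, e^{S − c ξ}) ] = −c · e^{c²/2} · E[ e^S · Φ( −S/|c| − |c| ) ], where Φ denotes the cumulative distribution function of the standard normal distribution. -/
open MeasureTheory ProbabilityTheory Real Set Filter Topology
open scoped ENNReal NNReal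

noncomputable def phi : ℝ → ℝ := gaussianPDFReal 0 1

lemma phi_def (x : ℝ) : phi x = (Real.sqrt (2 * π))⁻¹ * Real.exp (-x ^ 2 / 2) := by
  simp [phi, gaussianPDFReal]

lemma phi_fun_def : phi = fun x => (Real.sqrt (2 * π))⁻¹ * Real.exp (-x ^ 2 / 2) :=
  funext phi_def

lemma phi_nonneg (x : ℝ) : 0 ≤ phi x := gaussianPDFReal_nonneg 0 1 x

lemma phi_neg (x : ℝ) : phi (-x) = phi x := by simp [phi_def, neg_pow]

lemma phi_hasDeriv (x : ℝ) : HasDerivAt phi (-x * phi x) x := by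
  have h : HasDerivAt (fun y : ℝ => -y ^ 2 / 2) (-x) x := by
    exact (((hasDerivAt_pow 2 x).neg).div_const 2).congr_deriv (by ring)
  have h2 := (h.exp).const_mul ((Real.sqrt (2 * π))⁻¹)
  rw [phi_fun_def]
  exact h2.congr_deriv (by beta_reduce; ring)

lemma phi_cont : Continuous phi := by
  rw [phi_fun_def]; continuity

lemma phi_tendsto_atTop : Tendsto phi atTop (𝓝 0) := by
  rw [phi_fun_def, show (0:ℝ) = (Real.sqrt (2*π))⁻¹ * 0 by ring]
  refine Tendsto.const_mul _ ?_
  apply Real.tendsto_exp_atBot.comp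
  have h : Tendsto (fun x : ℝ => x ^ 2 / 2) atTop atTop :=
    (tendsto_pow_atTop (by norm_num)).atTop_div_const (by norm_num)
  have := tendsto_neg_atTop_atBot.comp h
  apply this.congr
  intro x; simp [Function.comp, neg_div]

lemma phi_tendsto_atBot : Tendsto phi atBot (𝓝 0) := by
  have := phi_tendsto_atTop.comp tendsto_neg_atBot_atTop
  apply this.congr
  intro x; simp [Function.comp, phi_neg]

lemma phi_shift (a x : ℝ) : Real.exp (a * x) * phi x = Real.exp (a ^ 2 / 2) * phi (x - a) := by
  simp only [phi_def]
  rw [show Real.exp (a*x) * ((Real.sqrt (2*π))⁻¹ * Real.exp (-x^2/2)) = (Real.sqrt (2*π))⁻¹ * (Real.exp (a*x) * Real.exp (-x^2/2)) by ring,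
      show Real.exp (a^2/2) * ((Real.sqrt (2*π))⁻¹ * Real.exp (-(x-a)^2/2)) = (Real.sqrt (2*π))⁻¹ * (Real.exp (a^2/2) * Real.exp (-(x-a)^2/2)) by ring,
      ← Real.exp_add, ← Real.exp_add]
  congr 1
  ring

lemma integrable_phi : Integrable phi := integrable_gaussianPDFReal 0 1

lemma integrable_mul_phi : Integrable (fun x => x * phi x) := by
  rw [phi_fun_def]
  have h : Integrable (fun x : ℝ => x * Real.exp (-(1/2) * x ^ 2)) :=
    integrable_mul_exp_neg_mul_sq (by norm_num)
  have := h.const_mul ((Real.sqrt (2 * π))⁻¹)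
  apply this.congr
  filter_upwards with x
  ring_nf

lemma phi_meas : Measurable phi := measurable_gaussianPDFReal 0 1

lemma gaussian_eq_withDensity :
    (gaussianReal 0 1 : Measure ℝ) = volume.withDensity (fun x => ((phi x).toNNReal : ℝ≥0∞)) := by
  rw [gaussianReal_of_var_ne_zero 0 one_ne_zero]
  rfl

lemma integral_gaussian_eq (g : ℝ → ℝ) :
    ∫ x, g x ∂(gaussianReal 0 1) = ∫ x, phi x * g x := by
  rw [gaussian_eq_withDensity, integral_withDensity_eq_integral_smul phi_meas.real_toNNReal g]
  congr 1; funext x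
  simp [NNReal.smul_def, Real.coe_toNNReal _ (phi_nonneg x)]

lemma integrable_gaussian_iff (g : ℝ → ℝ) :
    Integrable g (gaussianReal 0 1) ↔ Integrable (fun x => phi x * g x) := by
  rw [gaussian_eq_withDensity, integrable_withDensity_iff_integrable_smul phi_meas.real_toNNReal]
  constructor <;> intro h <;> apply h.congr <;> filter_upwards with x <;>
    simp [NNReal.smul_def, Real.coe_toNNReal _ (phi_nonneg x)]

lemma stdGaussianCDF_eq (u : ℝ) : stdGaussianCDF u = ∫ x in Iic u, phi x := by
  rw [stdGaussianCDF, cdf_eq_real, measureReal_def, gaussianReal_apply_eq_integral 0 one_ne_zero,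
    ENNReal.toReal_ofReal]
  · rfl
  · exact setIntegral_nonneg measurableSet_Iic fun x _ => phi_nonneg x

lemma stdGaussianCDF_neg_eq (u : ℝ) : stdGaussianCDF (-u) = ∫ x in Ioi u, phi x := by
  rw [stdGaussianCDF_eq]
  have h := integral_comp_neg_Iic (-u) phi
  rw [neg_neg] at h
  rw [← h]
  congr 1; funext x; rw [phi_neg]

lemma exp_phi (s c x : ℝ) :
    Real.exp (s - c * x) * phi x = Real.exp (s + c ^ 2 / 2) * phi (x + c) := by
  have h := phi_shift (-c) x
  rw [neg_mul, neg_sq, sub_neg_eq_add] at h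
  rw [← neg_mul] at h
  rw [sub_eq_add_neg, Real.exp_add, mul_assoc, ← neg_mul, h, Real.exp_add, mul_assoc]

lemma integrable_exp_phi (s c : ℝ) : Integrable (fun x => Real.exp (s - c * x) * phi x) := by
  simp_rw [exp_phi s c]
  exact (integrable_phi.comp_add_right c).const_mul _

lemma integrable_mul_exp_phi (s c : ℝ) :
    Integrable (fun x => (x + c) * (Real.exp (s - c * x) * phi x)) := by
  have h := (integrable_mul_phi.comp_add_right c).const_mul (Real.exp (s + c ^ 2 / 2))
  apply h.congr
  filter_upwards with x
  rw [exp_phi s c]; ring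

-- P1
lemma int_Iic_mul_phi (t : ℝ) : ∫ x in Iic t, x * phi x = -phi t := by
  have h := integral_Iic_of_hasDerivAt_of_tendsto' (f := fun x => -phi x)
    (f' := fun x => x * phi x) (a := t) (m := 0)
    (fun x _ => by exact (phi_hasDeriv x).neg.congr_deriv (by ring))
    integrable_mul_phi.integrableOn
    (by simpa using phi_tendsto_atBot.neg)
  simpa using h

-- P2
lemma int_Ioi_deriv (s c t : ℝ) :
    ∫ x in Ioi t, (x + c) * (Real.exp (s - c * x) * phi x) = Real.exp (s - c * t) * phi t := by
  have hd : ∀ x ∈ Ici t, HasDerivAt (fun x => -(Real.exp (s - c * x) * phi x))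
      ((x + c) * (Real.exp (s - c * x) * phi x)) x := by
    intro x _
    have h1 : HasDerivAt (fun x : ℝ => Real.exp (s - c * x)) (-c * Real.exp (s - c * x)) x := by
      have ha : HasDerivAt (fun x : ℝ => s - c * x) (-c) x := by
        simpa using ((hasDerivAt_id x).const_mul c).const_sub s
      simpa [mul_comm] using ha.exp
    have h2 := (h1.mul (phi_hasDeriv x)).neg
    exact h2.congr_deriv (by ring)
  have htend : Tendsto (fun x => -(Real.exp (s - c * x) * phi x)) atTop (𝓝 0) := by
    have : Tendsto (fun x => Real.exp (s + c ^ 2 / 2) * phi (x + c)) atTop (𝓝 0) := by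
      have hcomp := phi_tendsto_atTop.comp (tendsto_atTop_add_const_right atTop c tendsto_id)
      simpa using hcomp.const_mul (Real.exp (s + c ^ 2 / 2))
    have := this.neg
    simp only [neg_zero] at this
    apply this.congr
    intro x; rw [exp_phi s c]
  have h := integral_Ioi_of_hasDerivAt_of_tendsto' hd (integrable_mul_exp_phi s c).integrableOn htend
  simpa using h

-- P3
lemma int_Ioi_exp_phi (s c t : ℝ) :
    ∫ x in Ioi t, Real.exp (s - c * x) * phi x
      = Real.exp (s + c ^ 2 / 2) * stdGaussianCDF (-(t + c)) := by
  simp_rw [exp_phi s c]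
  rw [integral_const_mul, stdGaussianCDF_neg_eq]
  congr 1
  -- ∫ x in Ioi t, phi (x + c) = ∫ x in Ioi (t + c), phi x
  have h1 : (fun x => (Ioi t).indicator (fun x => phi (x + c)) x)
      = fun x => (Ioi (t + c)).indicator phi (x + c) := by
    funext x
    by_cases hx : x ∈ Ioi t
    · rw [indicator_of_mem hx, indicator_of_mem (by simpa [mem_Ioi] using add_lt_add_right hx.out c)]
    · rw [indicator_of_notMem hx, indicator_of_notMem]
      simp only [mem_Ioi, not_lt] at hx ⊢
      exact add_le_add_left hx c
  rw [← integral_indicator measurableSet_Ioi, ← integral_indicator measurableSet_Ioi, h1,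
    integral_add_right_eq_self]

lemma minexp_nonneg (u : ℝ) : 0 ≤ min 1 (Real.exp u) :=
  le_min zero_le_one (Real.exp_pos u).le

lemma minexp_le_one (u : ℝ) : min 1 (Real.exp u) ≤ 1 := min_le_left _ _

lemma integrable_F (s c : ℝ) :
    Integrable (fun x => phi x * (x * min 1 (Real.exp (s - c * x)))) := by
  have hcont : Continuous fun x => phi x * (x * min 1 (Real.exp (s - c * x))) := by
    apply phi_cont.mul
    exact continuous_id.mul (continuous_const.min (by continuity))
  refine integrable_mul_phi.mono hcont.aestronglyMeasurable ?_
  filter_upwards with x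
  have h0 := minexp_nonneg (s - c * x)
  have h1 := minexp_le_one (s - c * x)
  have := phi_nonneg x
  simp only [Real.norm_eq_abs, abs_mul]
  rw [abs_of_nonneg (phi_nonneg x), abs_of_nonneg h0]
  calc phi x * (|x| * min 1 (Real.exp (s - c * x))) ≤ phi x * (|x| * 1) := by
        apply mul_le_mul_of_nonneg_left (mul_le_mul_of_nonneg_left h1 (abs_nonneg x)) this
    _ = |x| * phi x := by ring

lemma oneDim_pos (s : ℝ) {c : ℝ} (hc : 0 < c) :
    ∫ x, x * min 1 (Real.exp (s - c * x)) ∂(gaussianReal 0 1)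
      = -c * Real.exp (c ^ 2 / 2) * (Real.exp s * stdGaussianCDF (-s / c - c)) := by
  rw [integral_gaussian_eq]
  set t := s / c with ht
  have hct : c * t = s := by rw [ht]; field_simp
  rw [← intervalIntegral.integral_Iic_add_Ioi (b := t) (integrable_F s c).integrableOn (integrable_F s c).integrableOn]
  have hIic : ∫ x in Iic t, phi x * (x * min 1 (Real.exp (s - c * x))) = -phi t := by
    rw [setIntegral_congr_fun measurableSet_Iic (g := fun x => x * phi x) ?_, int_Iic_mul_phi]
    intro x hx
    show phi x * (x * min 1 (Real.exp (s - c * x))) = x * phi x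
    have : 0 ≤ s - c * x := by
      have : c * x ≤ c * t := mul_le_mul_of_nonneg_left hx.out hc.le
      rw [hct] at this; linarith
    rw [min_eq_left (Real.one_le_exp this)]
    ring
  have hIoi : ∫ x in Ioi t, phi x * (x * min 1 (Real.exp (s - c * x)))
      = phi t - c * (Real.exp (s + c ^ 2 / 2) * stdGaussianCDF (-(t + c))) := by
    rw [setIntegral_congr_fun measurableSet_Ioi
      (g := fun x => (x + c) * (Real.exp (s - c * x) * phi x) - c * (Real.exp (s - c * x) * phi x)) ?_]
    · rw [integral_sub (integrable_mul_exp_phi s c).integrableOn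
        (((integrable_exp_phi s c).const_mul c).integrableOn), int_Ioi_deriv,
        integral_const_mul, int_Ioi_exp_phi]
      rw [show s - c * t = 0 by rw [hct]; ring, Real.exp_zero, one_mul]
    · intro x hx
      show phi x * (x * min 1 (Real.exp (s - c * x)))
        = (x + c) * (Real.exp (s - c * x) * phi x) - c * (Real.exp (s - c * x) * phi x)
      have hlt : s - c * x ≤ 0 := by
        have : c * t < c * x := mul_lt_mul_of_pos_left hx.out hc
        rw [hct] at this; linarith
      rw [min_eq_right (Real.exp_le_one_iff.mpr hlt)]
      ring
  rw [hIic, hIoi, Real.exp_add]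
  have : -(t + c) = -s / c - c := by rw [ht]; ring
  rw [this]
  ring

lemma oneDim (s : ℝ) {c : ℝ} (hc : c ≠ 0) :
    ∫ x, x * min 1 (Real.exp (s - c * x)) ∂(gaussianReal 0 1)
      = -c * Real.exp (c ^ 2 / 2) * (Real.exp s * stdGaussianCDF (-s / |c| - |c|)) := by
  rcases hc.lt_or_gt with hneg | hpos
  · have habs : |c| = -c := abs_of_neg hneg
    have hpos' : 0 < -c := by linarith
    have key := oneDim_pos s hpos'
    rw [integral_gaussian_eq] at key ⊢
    rw [← integral_neg_eq_self (fun x => phi x * (x * min 1 (Real.exp (s - c * x)))) volume]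
    simp only [phi_neg]
    have : (fun x => phi x * (-x * min 1 (Real.exp (s - c * -x))))
        = fun x => -(phi x * (x * min 1 (Real.exp (s - (-c) * x)))) := by
      funext x; rw [show s - c * -x = s - (-c) * x by ring]; ring
    rw [this, integral_neg, key, habs]
    rw [show -s / -c - -c = -s / -c + c by ring, neg_sq]
    rw [show (-s / -c + c) = -s / -c - - c by ring]
    ring
  · rw [abs_of_pos hpos]
    exact oneDim_pos s hpos

-- main theorem prelim lemmas
lemma integrable_id_gaussian : Integrable (fun x : ℝ => x) (gaussianReal 0 1) := by
  rw [integrable_gaussian_iff]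
  exact integrable_mul_phi.congr (by filter_upwards with x using mul_comm x (phi x))

lemma stdGaussianCDF_measurable : Measurable stdGaussianCDF :=
  (monotone_cdf _).measurable

/-- A conditional version of Lemma `lem:magic`, Equation `lem:normmo`
(as used in Lemma `lem:do2`): if `ξ ~ N(0,1)`, `S` is independent of `ξ`
with `E[e^S] < ∞`, and `c ≠ 0`, then
`E[ξ (1 ∧ e^{S − cξ})] = −c e^{c²/2} E[e^S Φ(−S/|c| − |c|)]`. -/
theorem stmt_14 {Ω : Type*} [MeasurableSpace Ω] (P : Measure Ω) [IsProbabilityMeasure P]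
    (ξ S : Ω → ℝ) (hξmeas : Measurable ξ) (hSmeas : Measurable S)
    (hξlaw : P.map ξ = gaussianReal 0 1)
    (hindep : IndepFun ξ S P)
    (hS : Integrable (fun ω => Real.exp (S ω)) P)
    (c : ℝ) (hc : c ≠ 0) :
    ∫ ω, ξ ω * min 1 (Real.exp (S ω - c * ξ ω)) ∂P
      = -c * Real.exp (c ^ 2 / 2) *
          ∫ ω, Real.exp (S ω) * stdGaussianCDF (-(S ω) / |c| - |c|) ∂P := by
  set γ : Measure ℝ := gaussianReal 0 1 with hγ
  set μ : Measure ℝ := P.map S with hμ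
  haveI : IsProbabilityMeasure μ := Measure.isProbabilityMeasure_map hSmeas.aemeasurable
  haveI : IsProbabilityMeasure γ := by rw [hγ]; infer_instance
  set F : ℝ × ℝ → ℝ := fun p => p.1 * min 1 (Real.exp (p.2 - c * p.1)) with hF
  have hFcont : Continuous F := by
    apply continuous_fst.mul
    exact continuous_const.min (by fun_prop)
  have hjoint : P.map (fun ω => (ξ ω, S ω)) = γ.prod μ := by
    rw [hμ, ← hξlaw]
    exact (indepFun_iff_map_prod_eq_prod_map_map hξmeas.aemeasurable hSmeas.aemeasurable).mp hindep
  have hFbound : ∀ p : ℝ × ℝ, ‖F p‖ ≤ |p.1| := by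
    intro p
    rw [hF]
    simp only [Real.norm_eq_abs, abs_mul]
    calc |p.1| * |min 1 (Real.exp (p.2 - c * p.1))| ≤ |p.1| * 1 := by
          apply mul_le_mul_of_nonneg_left _ (abs_nonneg _)
          rw [abs_of_nonneg (minexp_nonneg _)]
          exact minexp_le_one _
      _ = |p.1| := mul_one _
  have hFmeas : AEStronglyMeasurable F (γ.prod μ) := hFcont.aestronglyMeasurable
  have hFint : Integrable F (γ.prod μ) := by
    rw [integrable_prod_iff hFmeas]
    constructor
    · filter_upwards with x
      refine (integrable_const |x|).mono' ?_ ?_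
      · exact (hFcont.comp (Continuous.prodMk_right x)).aestronglyMeasurable
      · filter_upwards with y using hFbound (x, y)
    · refine (integrable_id_gaussian.abs).mono' (hFmeas.norm.integral_prod_right') ?_
      filter_upwards with x
      have hnn : 0 ≤ ∫ y, ‖F (x, y)‖ ∂μ := integral_nonneg fun y => norm_nonneg _
      rw [Real.norm_eq_abs, abs_of_nonneg hnn]
      calc ∫ y, ‖F (x, y)‖ ∂μ ≤ ∫ _, |x| ∂μ := by
            apply integral_mono_of_nonneg (by filter_upwards with y using norm_nonneg _)
              (integrable_const _)
            filter_upwards with y using hFbound (x, y)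
        _ = |x| := by simp
  have hLHS : ∫ ω, ξ ω * min 1 (Real.exp (S ω - c * ξ ω)) ∂P
      = ∫ s, ∫ x, x * min 1 (Real.exp (s - c * x)) ∂γ ∂μ := by
    have h1 : ∫ ω, ξ ω * min 1 (Real.exp (S ω - c * ξ ω)) ∂P
        = ∫ p, F p ∂(P.map (fun ω => (ξ ω, S ω))) := by
      rw [integral_map (hξmeas.prodMk hSmeas).aemeasurable hFcont.aestronglyMeasurable]
    rw [h1, hjoint, integral_prod_symm F hFint]
  rw [hLHS]
  have hinner : ∀ s : ℝ, ∫ x, x * min 1 (Real.exp (s - c * x)) ∂γ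
      = -c * Real.exp (c ^ 2 / 2) * (Real.exp s * stdGaussianCDF (-s / |c| - |c|)) :=
    fun s => oneDim s hc
  simp_rw [hinner]
  rw [integral_const_mul]
  congr 1
  have hmeas2 : AEStronglyMeasurable (fun s : ℝ => Real.exp s * stdGaussianCDF (-s / |c| - |c|)) μ := by
    apply Measurable.aestronglyMeasurable
    exact Real.measurable_exp.mul (stdGaussianCDF_measurable.comp (by fun_prop))
  rw [hμ] at hmeas2 ⊢
  rw [integral_map hSmeas.aemeasurable hmeas2]
end

section
/- Let M₀ > 0. There exists a constant M > 0, depending only on ℓ and M₀, such that the following holds for every N ∈ ℕ, every ζ ∈ ℝ^N, all indices 1 ≤ i, j ≤ N, and all λ_i, λ_j > 0: if Q is a real random variable (measurable with respect to ξ) satisfying E[|Q − R_{ij}(ζ,ξ)|²] ≤ (M₀/N)(1 + ζ_i² + ζ_j²), then | E[ λ_i ξ_i · λ_j ξ_j · min(1, e^{Q}) ] − λ_i λ_j δ_{ij} E[ min(1, e^{R_{ij}(ζ,ξ)}) ] | ≤ M λ_i λ_j (1 + ζ_i² + ζ_j²)^{1/2} N^{-1/2}, where δ_{ij} = 1 if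 i = j and 0 otherwise. -/
open MeasureTheory ProbabilityTheory

section Aux
open Real ENNReal

instance inst_s16 (N : ℕ) : IsProbabilityMeasure (gaussPi N) := by
  rw [gaussPi]; infer_instance

lemma aux_min_exp_lip (a b : ℝ) : |min 1 (Real.exp a) - min 1 (Real.exp b)| ≤ |a - b| := by
  wlog h : b ≤ a generalizing a b
  · rw [abs_sub_comm, abs_sub_comm a b]; exact this _ _ (le_of_not_ge h)
  have hm : min 1 (Real.exp b) ≤ min 1 (Real.exp a) :=
    min_le_min le_rfl (Real.exp_le_exp.2 h)
  rw [abs_of_nonneg (by linarith), abs_of_nonneg (by linarith)]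
  rcases le_or_gt (Real.exp a) 1 with ha | ha
  · rw [min_eq_right ha, min_eq_right ((Real.exp_le_exp.2 h).trans ha)]
    have h1 : (b - a) + 1 ≤ Real.exp (b - a) := Real.add_one_le_exp _
    have h2 : Real.exp b = Real.exp a * Real.exp (b - a) := by
      rw [← Real.exp_add]; ring_nf
    have h3 : 0 < Real.exp a := Real.exp_pos a
    nlinarith [Real.exp_pos (b - a)]
  · rw [min_eq_left ha.le]
    rcases le_or_gt 1 (Real.exp b) with hb | hb
    · rw [min_eq_left hb]; linarith
    · rw [min_eq_right hb.le]
      have h1 : b + 1 ≤ Real.exp b := Real.add_one_le_exp b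
      have h2 : 0 < a := by
        by_contra h2
        exact absurd (Real.exp_le_one_iff.2 (le_of_not_gt h2)) (not_le.2 ha)
      linarith

lemma aux_min_exp_bounds (a : ℝ) : |min 1 (Real.exp a)| ≤ 1 := by
  rw [abs_of_nonneg (le_min zero_le_one (Real.exp_pos a).le)]
  exact min_le_left _ _

lemma aux_gauss_integral_eq (f : ℝ → ℝ) :
    ∫ x, f x ∂gaussianReal 0 1 = ∫ x, gaussianPDFReal 0 1 x * f x := by
  rw [gaussianReal_of_var_ne_zero 0 one_ne_zero]
  have h1 : (gaussianPDF 0 1) =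
      fun x => (((gaussianPDFReal 0 1 x).toNNReal : NNReal) : ℝ≥0∞) := by
    ext x; rw [gaussianPDF]; rfl
  rw [h1, integral_withDensity_eq_integral_smul
    ((measurable_gaussianPDFReal 0 1).real_toNNReal) f]
  congr 1
  ext x
  simp only [NNReal.smul_def, smul_eq_mul]
  rw [Real.coe_toNNReal _ (gaussianPDFReal_nonneg 0 1 x)]

lemma aux_sq_exp_integral : ∫ x : ℝ, x ^ 2 * rexp (-x ^ 2 / 2) = Real.sqrt (2 * π) := by
  have habs : ∀ x : ℝ, x ^ 2 * rexp (-x ^ 2 / 2) = (fun t => t ^ 2 * rexp (-t ^ 2 / 2)) |x| := by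
    intro x; simp [sq_abs]
  rw [funext habs, integral_comp_abs (f := fun t => t ^ 2 * rexp (-t ^ 2 / 2))]
  have h2 : ∀ x ∈ Set.Ioi (0:ℝ), x ^ 2 * rexp (-x ^ 2 / 2) =
      x ^ (2:ℝ) * rexp (-(1/2) * x ^ (2:ℝ)) := by
    intro x _
    rw [Real.rpow_two]
    ring_nf
  rw [setIntegral_congr_fun measurableSet_Ioi h2,
    integral_rpow_mul_exp_neg_mul_rpow (by norm_num) (by norm_num) (by norm_num)]
  have hG : Real.Gamma (((2:ℝ) + 1) / 2) = Real.sqrt π / 2 := by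
    have h : ((2:ℝ) + 1) / 2 = 1/2 + 1 := by norm_num
    rw [h, Real.Gamma_add_one (by norm_num), Real.Gamma_one_half_eq]
    ring
  rw [hG]
  have hb : ((1:ℝ)/2) ^ (-((2:ℝ) + 1) / 2) = 2 * Real.sqrt 2 := by
    rw [one_div, Real.inv_rpow (by norm_num), ← Real.rpow_neg (by norm_num),
      show (-(-((2:ℝ) + 1) / 2)) = 1 + 1/2 by norm_num,
      Real.rpow_add (by norm_num), Real.rpow_one, ← Real.sqrt_eq_rpow]
  rw [hb, Real.sqrt_mul (by norm_num)]
  ring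

lemma aux_pdf01 (x : ℝ) : gaussianPDFReal 0 1 x = (Real.sqrt (2 * π))⁻¹ * rexp (-x ^ 2 / 2) := by
  rw [gaussianPDFReal]
  norm_num

lemma aux_integral_sq_gauss : ∫ x, x ^ 2 ∂gaussianReal 0 1 = 1 := by
  rw [aux_gauss_integral_eq]
  have h : ∀ x : ℝ, gaussianPDFReal 0 1 x * x ^ 2 =
      (Real.sqrt (2 * π))⁻¹ * (x ^ 2 * rexp (-x ^ 2 / 2)) := by
    intro x; rw [aux_pdf01]; ring
  rw [funext h, integral_const_mul, aux_sq_exp_integral]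
  rw [inv_mul_cancel₀]
  positivity

lemma aux_integral_id_gauss : ∫ x, x ∂gaussianReal 0 1 = 0 := by
  have hmap : (gaussianReal 0 1).map ((-1 : ℝ) * ·) = gaussianReal 0 1 := by
    rw [gaussianReal_map_const_mul]
    norm_num
  have h := integral_map (μ := gaussianReal 0 1) (φ := ((-1 : ℝ) * ·)) (f := fun x => x)
    (measurable_id.const_mul _).aemeasurable (by rw [hmap]; exact measurable_id.aestronglyMeasurable)
  rw [hmap] at h
  simp only [neg_one_mul] at h
  rw [integral_neg] at h
  linarith

noncomputable def C4 : ℝ≥0∞ := ∫⁻ x, ENNReal.ofReal (x ^ 4) ∂gaussianReal 0 1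

lemma aux_x4_bound (x : ℝ) : x ^ 4 * rexp (-x ^ 2 / 2) ≤ 64 * rexp (-(1/4) * x ^ 2) := by
  have hA : x ^ 2 / 8 + 1 ≤ rexp (x ^ 2 / 8) := Real.add_one_le_exp _
  have hB : rexp (x ^ 2 / 8) * rexp (x ^ 2 / 8) = rexp (x ^ 2 / 4) := by
    rw [← Real.exp_add]; ring_nf
  have hC : rexp (x ^ 2 / 4) * rexp (-x ^ 2 / 2) = rexp (-(1/4) * x ^ 2) := by
    rw [← Real.exp_add]; ring_nf
  have hD : (0:ℝ) < rexp (-x ^ 2 / 2) := Real.exp_pos _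
  have hE : (0:ℝ) < rexp (x ^ 2 / 8) := Real.exp_pos _
  have h1 : x ^ 2 ≤ 8 * rexp (x ^ 2 / 8) := by linarith
  have h2 : x ^ 4 ≤ 64 * (rexp (x ^ 2 / 8) * rexp (x ^ 2 / 8)) := by nlinarith [sq_nonneg x]
  calc x ^ 4 * rexp (-x ^ 2 / 2) ≤ 64 * (rexp (x ^ 2 / 8) * rexp (x ^ 2 / 8)) * rexp (-x ^ 2 / 2) :=
        mul_le_mul_of_nonneg_right h2 hD.le
    _ = 64 * rexp (-(1/4) * x ^ 2) := by rw [hB]; rw [mul_assoc, hC]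

lemma C4_lt_top : C4 < ∞ := by
  rw [C4, gaussianReal_of_var_ne_zero 0 one_ne_zero,
    lintegral_withDensity_eq_lintegral_mul _ (measurable_gaussianPDF 0 1)
      (by fun_prop : Measurable fun x : ℝ => ENNReal.ofReal (x ^ 4))]
  have hle : ∀ x : ℝ, (gaussianPDF 0 1 * fun x => ENNReal.ofReal (x ^ 4)) x ≤
      ENNReal.ofReal ((Real.sqrt (2 * π))⁻¹ * 64 * rexp (-(1/4) * x ^ 2)) := by
    intro x
    have h : (gaussianPDF 0 1 * fun x => ENNReal.ofReal (x ^ 4)) x =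
        ENNReal.ofReal (gaussianPDFReal 0 1 x * x ^ 4) := by
      simp only [Pi.mul_apply, gaussianPDF]
      rw [ENNReal.ofReal_mul (gaussianPDFReal_nonneg 0 1 x)]
    rw [h]
    apply ENNReal.ofReal_le_ofReal
    rw [aux_pdf01]
    have h := aux_x4_bound x
    have hs : (0:ℝ) ≤ (Real.sqrt (2 * π))⁻¹ := by positivity
    calc (Real.sqrt (2 * π))⁻¹ * rexp (-x ^ 2 / 2) * x ^ 4
        = (Real.sqrt (2 * π))⁻¹ * (x ^ 4 * rexp (-x ^ 2 / 2)) := by ring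
      _ ≤ (Real.sqrt (2 * π))⁻¹ * (64 * rexp (-(1/4) * x ^ 2)) :=
          mul_le_mul_of_nonneg_left h hs
      _ = (Real.sqrt (2 * π))⁻¹ * 64 * rexp (-(1/4) * x ^ 2) := by ring
  calc ∫⁻ x, (gaussianPDF 0 1 * fun x => ENNReal.ofReal (x ^ 4)) x
      ≤ ∫⁻ x, ENNReal.ofReal ((Real.sqrt (2 * π))⁻¹ * 64 * rexp (-(1/4) * x ^ 2)) :=
        lintegral_mono hle
    _ = ENNReal.ofReal (∫ x, (Real.sqrt (2 * π))⁻¹ * 64 * rexp (-(1/4) * x ^ 2)) := by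
        rw [ofReal_integral_eq_lintegral_ofReal]
        · exact (integrable_exp_neg_mul_sq (by norm_num : (0:ℝ) < 1/4)).const_mul _
        · filter_upwards with x; positivity
    _ < ∞ := ENNReal.ofReal_lt_top

lemma aux_pi_single_lintegral {κ : Type*} (F : Fintype κ) (U : Unique κ) (a : κ) (f : ℝ → ℝ≥0∞)
    (hf : Measurable f) :
    ∫⁻ x : κ → ℝ, f (x a) ∂(@Measure.pi κ (fun _ => ℝ) F _ (fun _ => gaussianReal 0 1))
      = ∫⁻ r, f r ∂gaussianReal 0 1 := by
  rw [Subsingleton.elim F (@Unique.fintype κ U), Unique.eq_default a]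
  exact (measurePreserving_funUnique (gaussianReal 0 1) κ).lintegral_comp hf

lemma aux_pi_single_integral {κ : Type*} (F : Fintype κ) (U : Unique κ) (a : κ) (φ : ℝ → ℝ) :
    ∫ x : κ → ℝ, φ (x a) ∂(@Measure.pi κ (fun _ => ℝ) F _ (fun _ => gaussianReal 0 1))
      = ∫ r, φ r ∂gaussianReal 0 1 := by
  rw [Subsingleton.elim F (@Unique.fintype κ U), Unique.eq_default a]
  exact (measurePreserving_funUnique (gaussianReal 0 1) κ).integral_comp
    (MeasurableEquiv.funUnique κ ℝ).measurableEmbedding φ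

variable {N : ℕ}

lemma aux_lintegral_eval (i : Fin N) (f : ℝ → ℝ≥0∞) (hf : Measurable f) :
    ∫⁻ ξ, f (ξ i) ∂gaussPi N = ∫⁻ r, f r ∂gaussianReal 0 1 := by
  classical
  haveI U : Unique {k : Fin N // k = i} := ⟨⟨⟨i, rfl⟩⟩, fun a => Subtype.ext a.2⟩
  simp only [gaussPi]
  have hmp := measurePreserving_piEquivPiSubtypeProd
    (ι := Fin N) (α := fun _ => ℝ) (fun _ => gaussianReal 0 1) (fun k => k = i)
  have h1 := hmp.lintegral_comp
    (f := fun z : (({k : Fin N // k = i} → ℝ) × ({k : Fin N // ¬ k = i} → ℝ)) =>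
      f (z.1 ⟨i, rfl⟩)) (hf.comp ((measurable_pi_apply _).comp measurable_fst))
  have h2 : ∫⁻ ξ : Fin N → ℝ, f (ξ i) ∂(Measure.pi fun _ => gaussianReal 0 1)
      = ∫⁻ a : Fin N → ℝ, f (((MeasurableEquiv.piEquivPiSubtypeProd (fun _ : Fin N => ℝ)
          (fun k => k = i)) a).1 ⟨i, rfl⟩) ∂(Measure.pi fun _ => gaussianReal 0 1) := rfl
  rw [h2, h1, lintegral_prod _ (by fun_prop)]
  simp only [lintegral_const, measure_univ, mul_one]
  exact aux_pi_single_lintegral _ U _ f hf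

lemma aux_factor (i : Fin N) (φ : ℝ → ℝ) (g : (Fin N → ℝ) → ℝ)
    (hg : ∀ ξ η : Fin N → ℝ, (∀ k, k ≠ i → ξ k = η k) → g ξ = g η) :
    ∫ ξ, φ (ξ i) * g ξ ∂gaussPi N
      = (∫ r, φ r ∂gaussianReal 0 1) * ∫ ξ, g ξ ∂gaussPi N := by
  classical
  haveI U : Unique {k : Fin N // k = i} := ⟨⟨⟨i, rfl⟩⟩, fun a => Subtype.ext a.2⟩
  simp only [gaussPi]
  set e := MeasurableEquiv.piEquivPiSubtypeProd (fun _ : Fin N => ℝ) (fun k => k = i) with he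
  have hmp := measurePreserving_piEquivPiSubtypeProd
    (ι := Fin N) (α := fun _ => ℝ) (fun _ => gaussianReal 0 1) (fun k => k = i)
  have hsymm := MeasurePreserving.symm e hmp
  set G : ({k : Fin N // ¬ k = i} → ℝ) → ℝ :=
    fun y => g (e.symm ((fun _ => 0), y)) with hG
  have hkey : ∀ z : (({k : Fin N // k = i} → ℝ) × ({k : Fin N // ¬ k = i} → ℝ)),
      g (e.symm z) = G z.2 := by
    rintro ⟨x, y⟩
    apply hg
    intro k hk
    show (Equiv.piEquivPiSubtypeProd (fun k => k = i) (fun _ : Fin N => ℝ)).symm (x, y) k =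
      (Equiv.piEquivPiSubtypeProd (fun k => k = i) (fun _ : Fin N => ℝ)).symm (fun _ => 0, y) k
    simp only [Equiv.piEquivPiSubtypeProd_symm_apply, dif_neg hk]
  have hei : ∀ z : (({k : Fin N // k = i} → ℝ) × ({k : Fin N // ¬ k = i} → ℝ)),
      e.symm z i = z.1 ⟨i, rfl⟩ := by
    rintro ⟨x, y⟩
    show (Equiv.piEquivPiSubtypeProd (fun k => k = i) (fun _ : Fin N => ℝ)).symm (x, y) i =
      x ⟨i, rfl⟩
    simp [Equiv.piEquivPiSubtypeProd_symm_apply]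
  have h0 := hsymm.integral_comp e.symm.measurableEmbedding (fun ξ => φ (ξ i) * g ξ)
  simp only [hkey, hei] at h0
  rw [← h0, integral_prod_mul (f := fun x : ({k : Fin N // k = i} → ℝ) => φ (x ⟨i, rfl⟩)) (g := G)]
  congr 1
  · exact aux_pi_single_integral _ U _ φ
  · have h4 := hsymm.integral_comp e.symm.measurableEmbedding g
    simp only [hkey] at h4
    rw [← h4]
    have h5 : ∀ z : (({k : Fin N // k = i} → ℝ) × ({k : Fin N // ¬ k = i} → ℝ)),
        G z.2 = (fun _ : ({k : Fin N // k = i} → ℝ) => (1:ℝ)) z.1 * G z.2 := by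
      intro z; rw [one_mul]
    rw [funext h5, integral_prod_mul (f := fun _ : ({k : Fin N // k = i} → ℝ) => (1:ℝ)) (g := G)]
    simp

lemma aux_integrable (i j : Fin N) (m : (Fin N → ℝ) → ℝ) (hm : Measurable m)
    (hb : ∀ ξ, |m ξ| ≤ 1) :
    Integrable (fun ξ => ξ i * ξ j * m ξ) (gaussPi N) := by
  refine ⟨((measurable_pi_apply i).mul (measurable_pi_apply j)).mul hm
    |>.aestronglyMeasurable, ?_⟩
  have hpt : ∀ ξ : Fin N → ℝ, (‖ξ i * ξ j * m ξ‖₊ : ℝ≥0∞)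
      ≤ 1 + (ENNReal.ofReal ((ξ i) ^ 4) + ENNReal.ofReal ((ξ j) ^ 4)) := by
    intro ξ
    rw [show (‖ξ i * ξ j * m ξ‖₊ : ℝ≥0∞) = ‖ξ i * ξ j * m ξ‖ₑ from rfl, Real.enorm_eq_ofReal_abs]
    have h1 : |ξ i * ξ j * m ξ| ≤ 1 + ((ξ i) ^ 4 + (ξ j) ^ 4) := by
      have h2 : |ξ i * ξ j * m ξ| = |ξ i| * |ξ j| * |m ξ| := by
        rw [abs_mul, abs_mul]
      have h3 : |ξ i| * |ξ j| * |m ξ| ≤ |ξ i| * |ξ j| * 1 :=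
        mul_le_mul_of_nonneg_left (hb ξ) (by positivity)
      have h4 : |ξ i| * |ξ j| ≤ 1 + ((ξ i) ^ 4 + (ξ j) ^ 4) := by
        nlinarith [sq_nonneg (|ξ i| - |ξ j|), sq_abs (ξ i), sq_abs (ξ j),
          abs_nonneg (ξ i), abs_nonneg (ξ j), sq_nonneg ((ξ i)^2 - 1), sq_nonneg ((ξ j)^2 - 1),
          sq_nonneg ((ξ i)^2 + (ξ j)^2)]
      linarith
    calc ENNReal.ofReal |ξ i * ξ j * m ξ| ≤ ENNReal.ofReal (1 + ((ξ i) ^ 4 + (ξ j) ^ 4)) :=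
          ENNReal.ofReal_le_ofReal h1
      _ = 1 + (ENNReal.ofReal ((ξ i) ^ 4) + ENNReal.ofReal ((ξ j) ^ 4)) := by
          rw [ENNReal.ofReal_add (by norm_num) (by positivity),
            ENNReal.ofReal_add (by positivity) (by positivity), ENNReal.ofReal_one]
  have hbnd : ∫⁻ ξ, (‖ξ i * ξ j * m ξ‖₊ : ℝ≥0∞) ∂gaussPi N
      ≤ ∫⁻ ξ, (1 + (ENNReal.ofReal ((ξ i) ^ 4) + ENNReal.ofReal ((ξ j) ^ 4))) ∂gaussPi N :=
    lintegral_mono hpt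
  rw [HasFiniteIntegral]
  refine lt_of_le_of_lt hbnd ?_
  rw [lintegral_add_left measurable_const, lintegral_add_left (by fun_prop)]
  rw [aux_lintegral_eval i (fun r => ENNReal.ofReal (r ^ 4)) (by fun_prop),
    aux_lintegral_eval j (fun r => ENNReal.ofReal (r ^ 4)) (by fun_prop)]
  simp only [lintegral_const, measure_univ, mul_one]
  have := C4_lt_top
  rw [← C4]
  exact ENNReal.add_lt_top.2 ⟨ENNReal.one_lt_top, ENNReal.add_lt_top.2 ⟨this, this⟩⟩

end Aux

/-- Lemma `lem:drifvar`, bound `eqn:rhoij` on the error `θ_{ij}`: there is a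
constant `M > 0` depending only on `ℓ` and `M₀` such that for all `N`,
`ζ ∈ ℝ^N`, indices `i, j`, weights `λ_i, λ_j > 0` and any random variable `Q`
(a measurable function of `ξ`) with `E[|Q − R_{ij}(ζ,ξ)|²] ≤ (M₀/N)(1 + ζ_i² + ζ_j²)`,
`|E[λ_i ξ_i λ_j ξ_j (1 ∧ e^Q)] − λ_i λ_j δ_{ij} E[1 ∧ e^{R_{ij}}]|
  ≤ M λ_i λ_j (1 + ζ_i² + ζ_j²)^{1/2} N^{-1/2}`. -/


theorem stmt_16 (ℓ : ℝ) (hℓ : 0 < ℓ) (M₀ : ℝ) (hM₀ : 0 < M₀) :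
    ∃ M : ℝ, 0 < M ∧
      ∀ N : ℕ, 0 < N → ∀ ζ : Fin N → ℝ, ∀ i j : Fin N, ∀ li lj : ℝ,
        0 < li → 0 < lj → ∀ Q : (Fin N → ℝ) → ℝ, Measurable Q →
          (∫⁻ ξ, ENNReal.ofReal ((Q ξ - Rijfun ℓ N ζ ξ i j) ^ 2) ∂gaussPi N
            ≤ ENNReal.ofReal (M₀ / N * (1 + ζ i ^ 2 + ζ j ^ 2))) →
          |(∫ ξ, (li * ξ i) * (lj * ξ j) * min 1 (Real.exp (Q ξ)) ∂gaussPi N) -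
              li * lj * (if i = j then (1 : ℝ) else 0) *
                ∫ ξ, min 1 (Real.exp (Rijfun ℓ N ζ ξ i j)) ∂gaussPi N|
            ≤ M * li * lj * Real.sqrt (1 + ζ i ^ 2 + ζ j ^ 2) / Real.sqrt N := by
  classical
  refine ⟨Real.sqrt ((2 * C4).toReal) * Real.sqrt M₀ + 1, by positivity, ?_⟩
  intro N hN ζ i j li lj hli hlj Q hQ hQR
  have hRmeas : Measurable (fun ξ : Fin N → ℝ => Rijfun ℓ N ζ ξ i j) := by
    unfold Rijfun
    apply Measurable.sub
    · exact (Finset.measurable_sum _ fun k _ =>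
        by fun_prop).const_mul _
    · exact (Finset.measurable_sum _ fun k _ =>
        ((measurable_pi_apply k).pow_const 2)).const_mul _
  have hRdep : ∀ ξ η : Fin N → ℝ, (∀ k, k ≠ i → ξ k = η k) →
      Rijfun ℓ N ζ ξ i j = Rijfun ℓ N ζ η i j := by
    intro ξ η h
    unfold Rijfun
    have hmem : ∀ k ∈ (Finset.univ.erase i).erase j, ξ k = η k := fun k hk =>
      h k (Finset.mem_erase.1 (Finset.mem_erase.1 hk).2).1
    rw [show (∑ k ∈ (Finset.univ.erase i).erase j, ζ k * ξ k)
          = ∑ k ∈ (Finset.univ.erase i).erase j, ζ k * η k from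
        Finset.sum_congr rfl fun k hk => by rw [hmem k hk],
      show (∑ k ∈ (Finset.univ.erase i).erase j, ξ k ^ 2)
          = ∑ k ∈ (Finset.univ.erase i).erase j, η k ^ 2 from
        Finset.sum_congr rfl fun k hk => by rw [hmem k hk]]
  have hmQmeas : Measurable (fun ξ : Fin N → ℝ => min 1 (Real.exp (Q ξ))) :=
    measurable_const.min hQ.exp
  have hmRmeas : Measurable (fun ξ : Fin N → ℝ => min 1 (Real.exp (Rijfun ℓ N ζ ξ i j))) :=
    measurable_const.min hRmeas.exp
  have hInt1 : Integrable (fun ξ : Fin N → ℝ => ξ i * ξ j * min 1 (Real.exp (Q ξ)))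
      (gaussPi N) := aux_integrable i j _ hmQmeas fun ξ => aux_min_exp_bounds _
  have hInt2 : Integrable
      (fun ξ : Fin N → ℝ => ξ i * ξ j * min 1 (Real.exp (Rijfun ℓ N ζ ξ i j)))
      (gaussPi N) := aux_integrable i j _ hmRmeas fun ξ => aux_min_exp_bounds _
  have hA : (∫ ξ, (li * ξ i) * (lj * ξ j) * min 1 (Real.exp (Q ξ)) ∂gaussPi N)
      = li * lj * ∫ ξ, ξ i * ξ j * min 1 (Real.exp (Q ξ)) ∂gaussPi N := by
    rw [← integral_const_mul]
    congr 1; funext ξ; ring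
  have hE2 : ∫ ξ, ξ i * ξ j * min 1 (Real.exp (Rijfun ℓ N ζ ξ i j)) ∂gaussPi N
      = (if i = j then (1:ℝ) else 0)
        * ∫ ξ, min 1 (Real.exp (Rijfun ℓ N ζ ξ i j)) ∂gaussPi N := by
    by_cases hij : i = j
    · subst hij
      rw [if_pos rfl, one_mul]
      have h1 : ∫ ξ : Fin N → ℝ, ξ i * ξ i * min 1 (Real.exp (Rijfun ℓ N ζ ξ i i)) ∂gaussPi N
          = (∫ r, r * r ∂gaussianReal 0 1)
            * ∫ ξ, min 1 (Real.exp (Rijfun ℓ N ζ ξ i i)) ∂gaussPi N :=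
        aux_factor i (fun x => x * x) _ (fun ξ η h => by rw [hRdep ξ η h])
      have h2 : ∫ r, r * r ∂gaussianReal 0 1 = 1 := by
        have h3 : (fun r : ℝ => r * r) = fun r => r ^ 2 := funext fun r => (sq r).symm
        rw [h3, aux_integral_sq_gauss]
      rw [h1, h2, one_mul]
    · rw [if_neg hij, zero_mul]
      have hmul : (fun ξ : Fin N → ℝ => ξ i * ξ j * min 1 (Real.exp (Rijfun ℓ N ζ ξ i j)))
          = fun ξ => ξ i * (ξ j * min 1 (Real.exp (Rijfun ℓ N ζ ξ i j))) :=
        funext fun ξ => mul_assoc _ _ _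
      rw [hmul]
      have h1 : ∫ ξ : Fin N → ℝ, ξ i * (ξ j * min 1 (Real.exp (Rijfun ℓ N ζ ξ i j))) ∂gaussPi N
          = (∫ r, r ∂gaussianReal 0 1)
            * ∫ ξ, ξ j * min 1 (Real.exp (Rijfun ℓ N ζ ξ i j)) ∂gaussPi N :=
        aux_factor i (fun x => x) _ (fun ξ η h => by
          rw [h j fun hj => hij hj.symm, hRdep ξ η h])
      rw [h1, aux_integral_id_gauss, zero_mul]
  have hsub : (∫ ξ, ξ i * ξ j * min 1 (Real.exp (Q ξ)) ∂gaussPi N)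
      - ∫ ξ, ξ i * ξ j * min 1 (Real.exp (Rijfun ℓ N ζ ξ i j)) ∂gaussPi N
      = ∫ ξ, ξ i * ξ j
          * (min 1 (Real.exp (Q ξ)) - min 1 (Real.exp (Rijfun ℓ N ζ ξ i j))) ∂gaussPi N := by
    rw [← integral_sub hInt1 hInt2]
    congr 1; funext ξ; ring
  rw [hA]
  have hstep : li * lj * (if i = j then (1:ℝ) else 0)
      * ∫ ξ, min 1 (Real.exp (Rijfun ℓ N ζ ξ i j)) ∂gaussPi N
      = li * lj * ∫ ξ, ξ i * ξ j * min 1 (Real.exp (Rijfun ℓ N ζ ξ i j)) ∂gaussPi N := by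
    rw [hE2]; ring
  rw [hstep, ← mul_sub, hsub, abs_mul, abs_of_pos (mul_pos hli hlj)]
  -- Cauchy-Schwarz step
  set u := fun ξ : Fin N → ℝ =>
    ξ i * ξ j * (min 1 (Real.exp (Q ξ)) - min 1 (Real.exp (Rijfun ℓ N ζ ξ i j))) with hu
  have humeas : Measurable u :=
    ((measurable_pi_apply i).mul (measurable_pi_apply j)).mul (hmQmeas.sub hmRmeas)
  have h5 : |∫ ξ, u ξ ∂gaussPi N| ≤ ∫ ξ, |u ξ| ∂gaussPi N := by
    calc |∫ ξ, u ξ ∂gaussPi N| = ‖∫ ξ, u ξ ∂gaussPi N‖ := (Real.norm_eq_abs _).symm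
      _ ≤ ∫ ξ, ‖u ξ‖ ∂gaussPi N := norm_integral_le_integral_norm u
      _ = ∫ ξ, |u ξ| ∂gaussPi N := by simp only [Real.norm_eq_abs]
  have h6 : ∫ ξ, |u ξ| ∂gaussPi N = (∫⁻ ξ, ENNReal.ofReal |u ξ| ∂gaussPi N).toReal :=
    integral_eq_lintegral_of_nonneg_ae (Filter.Eventually.of_forall fun ξ => abs_nonneg _)
      humeas.abs.aestronglyMeasurable
  set f1 := fun ξ : Fin N → ℝ => ENNReal.ofReal |ξ i * ξ j| with hf1
  set f2 := fun ξ : Fin N → ℝ =>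
    ENNReal.ofReal |min 1 (Real.exp (Q ξ)) - min 1 (Real.exp (Rijfun ℓ N ζ ξ i j))| with hf2
  have hsplit : ∀ ξ, ENNReal.ofReal |u ξ| = (f1 * f2) ξ := by
    intro ξ
    simp only [Pi.mul_apply, hf1, hf2, hu]
    rw [abs_mul, ENNReal.ofReal_mul (abs_nonneg _)]
  have hconj : Real.HolderConjugate 2 2 := Real.HolderConjugate.two_two
  have hH := ENNReal.lintegral_mul_le_Lp_mul_Lq (gaussPi N) hconj
    (((measurable_pi_apply i).mul (measurable_pi_apply j)).abs.ennreal_ofReal.aemeasurable)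
    ((hmQmeas.sub hmRmeas).abs.ennreal_ofReal.aemeasurable)
  have bound1 : (∫⁻ ξ, f1 ξ ^ (2:ℝ) ∂gaussPi N) ≤ 2 * C4 := by
    have hpt : ∀ ξ : Fin N → ℝ, f1 ξ ^ (2:ℝ)
        ≤ ENNReal.ofReal ((ξ i) ^ 4) + ENNReal.ofReal ((ξ j) ^ 4) := by
      intro ξ
      rw [hf1]
      rw [ENNReal.ofReal_rpow_of_nonneg (abs_nonneg _) (by norm_num), Real.rpow_two]
      calc ENNReal.ofReal (|ξ i * ξ j| ^ 2)
          = ENNReal.ofReal ((ξ i) ^ 2 * (ξ j) ^ 2) := by rw [sq_abs, mul_pow]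
        _ ≤ ENNReal.ofReal ((ξ i) ^ 4 + (ξ j) ^ 4) := ENNReal.ofReal_le_ofReal
            (by nlinarith [sq_nonneg ((ξ i) ^ 2 - (ξ j) ^ 2)])
        _ = ENNReal.ofReal ((ξ i) ^ 4) + ENNReal.ofReal ((ξ j) ^ 4) :=
            ENNReal.ofReal_add (by positivity) (by positivity)
    calc (∫⁻ ξ, f1 ξ ^ (2:ℝ) ∂gaussPi N)
        ≤ ∫⁻ ξ, (ENNReal.ofReal ((ξ i) ^ 4) + ENNReal.ofReal ((ξ j) ^ 4)) ∂gaussPi N :=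
          lintegral_mono hpt
      _ = C4 + C4 := by
          rw [lintegral_add_left (by fun_prop),
            aux_lintegral_eval i (fun r => ENNReal.ofReal (r ^ 4)) (by fun_prop),
            aux_lintegral_eval j (fun r => ENNReal.ofReal (r ^ 4)) (by fun_prop)]
          rfl
      _ = 2 * C4 := (two_mul C4).symm
  have bound2 : (∫⁻ ξ, f2 ξ ^ (2:ℝ) ∂gaussPi N)
      ≤ ENNReal.ofReal (M₀ / N * (1 + ζ i ^ 2 + ζ j ^ 2)) := by
    have hpt2 : ∀ ξ : Fin N → ℝ, f2 ξ ^ (2:ℝ)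
        ≤ ENNReal.ofReal ((Q ξ - Rijfun ℓ N ζ ξ i j) ^ 2) := by
      intro ξ
      rw [hf2]
      rw [ENNReal.ofReal_rpow_of_nonneg (abs_nonneg _) (by norm_num), Real.rpow_two]
      apply ENNReal.ofReal_le_ofReal
      have hlip := aux_min_exp_lip (Q ξ) (Rijfun ℓ N ζ ξ i j)
      calc |min 1 (Real.exp (Q ξ)) - min 1 (Real.exp (Rijfun ℓ N ζ ξ i j))| ^ 2
          ≤ |Q ξ - Rijfun ℓ N ζ ξ i j| ^ 2 := pow_le_pow_left₀ (abs_nonneg _) hlip 2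
        _ = (Q ξ - Rijfun ℓ N ζ ξ i j) ^ 2 := sq_abs _
    exact le_trans (lintegral_mono hpt2) hQR
  have hK : (∫⁻ ξ, ENNReal.ofReal |u ξ| ∂gaussPi N)
      ≤ (2 * C4) ^ (1/2 : ℝ)
        * (ENNReal.ofReal (M₀ / N * (1 + ζ i ^ 2 + ζ j ^ 2))) ^ (1/2 : ℝ) := by
    rw [lintegral_congr hsplit]
    refine hH.trans ?_
    exact mul_le_mul' (ENNReal.rpow_le_rpow bound1 (by norm_num))
      (ENNReal.rpow_le_rpow bound2 (by norm_num))
  have h2C4 : (2 * C4) ≠ ⊤ := ENNReal.mul_ne_top (by simp) C4_lt_top.ne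
  have hfin : (2 * C4) ^ (1/2 : ℝ)
      * (ENNReal.ofReal (M₀ / N * (1 + ζ i ^ 2 + ζ j ^ 2))) ^ (1/2 : ℝ) ≠ ⊤ :=
    (ENNReal.mul_lt_top
      (ENNReal.rpow_lt_top_of_nonneg (show (0:ℝ) ≤ 1/2 by norm_num) h2C4)
      (ENNReal.rpow_lt_top_of_nonneg (show (0:ℝ) ≤ 1/2 by norm_num)
        ENNReal.ofReal_ne_top)).ne
  have h7 : |∫ ξ, u ξ ∂gaussPi N|
      ≤ ((2 * C4) ^ (1/2 : ℝ)
        * (ENNReal.ofReal (M₀ / N * (1 + ζ i ^ 2 + ζ j ^ 2))) ^ (1/2 : ℝ)).toReal := by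
    refine h5.trans ?_
    rw [h6]
    exact ENNReal.toReal_mono hfin hK
  have h8 : ((2 * C4) ^ (1/2 : ℝ)
      * (ENNReal.ofReal (M₀ / N * (1 + ζ i ^ 2 + ζ j ^ 2))) ^ (1/2 : ℝ)).toReal
      = Real.sqrt ((2 * C4).toReal) * Real.sqrt (M₀ / N * (1 + ζ i ^ 2 + ζ j ^ 2)) := by
    rw [ENNReal.toReal_mul, ← ENNReal.toReal_rpow, ← ENNReal.toReal_rpow,
      ENNReal.toReal_ofReal (by positivity), ← Real.sqrt_eq_rpow, ← Real.sqrt_eq_rpow]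
  have h9 : Real.sqrt (M₀ / N * (1 + ζ i ^ 2 + ζ j ^ 2))
      = Real.sqrt M₀ * Real.sqrt (1 + ζ i ^ 2 + ζ j ^ 2) / Real.sqrt N := by
    rw [Real.sqrt_mul (by positivity), Real.sqrt_div hM₀.le]
    ring
  have hS0 : (0:ℝ) ≤ Real.sqrt (1 + ζ i ^ 2 + ζ j ^ 2) := Real.sqrt_nonneg _
  have hN0 : (0:ℝ) ≤ Real.sqrt N := Real.sqrt_nonneg _
  calc li * lj * |∫ ξ, u ξ ∂gaussPi N|
      ≤ li * lj * (Real.sqrt ((2 * C4).toReal)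
          * (Real.sqrt M₀ * Real.sqrt (1 + ζ i ^ 2 + ζ j ^ 2) / Real.sqrt N)) := by
        refine mul_le_mul_of_nonneg_left ?_ (by positivity)
        calc |∫ ξ, u ξ ∂gaussPi N| ≤ _ := h7
          _ = Real.sqrt ((2 * C4).toReal)
              * Real.sqrt (M₀ / N * (1 + ζ i ^ 2 + ζ j ^ 2)) := h8
          _ = Real.sqrt ((2 * C4).toReal)
              * (Real.sqrt M₀ * Real.sqrt (1 + ζ i ^ 2 + ζ j ^ 2) / Real.sqrt N) := by rw [h9]
    _ = Real.sqrt ((2 * C4).toReal) * Real.sqrt M₀ * li * lj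
          * Real.sqrt (1 + ζ i ^ 2 + ζ j ^ 2) / Real.sqrt N := by ring
    _ ≤ (Real.sqrt ((2 * C4).toReal) * Real.sqrt M₀ + 1) * li * lj
          * Real.sqrt (1 + ζ i ^ 2 + ζ j ^ 2) / Real.sqrt N := by
        have hx : Real.sqrt ((2 * C4).toReal) * Real.sqrt M₀
            ≤ Real.sqrt ((2 * C4).toReal) * Real.sqrt M₀ + 1 := by linarith
        gcongr
end

section
/- Let X and Z be real random variables whose distributions are atomless (equivalently, have continuous cumulative distribution functions). Then | E[ e^{X} 1_{X < 0} ] − E[ e^{Z} 1_{Z < 0} ] | ≤ 2 · sup_{t∈ℝ} | P(X ≤ t) − P(Z ≤ t) |. -/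
open MeasureTheory

lemma meas_lt_eq_meas_le {Ω : Type*} [MeasurableSpace Ω] (P : Measure Ω)
    (X : Ω → ℝ) (hat : ∀ t : ℝ, P {ω | X ω = t} = 0) (s : ℝ) :
    P {ω | X ω < s} = P {ω | X ω ≤ s} := by
  have h : {ω | X ω ≤ s} = {ω | X ω < s} ∪ {ω | X ω = s} := by
    ext ω; simp [le_iff_lt_or_eq]
  refine le_antisymm (measure_mono fun ω hω => le_of_lt (Set.mem_setOf_eq ▸ hω)) ?_
  calc P {ω | X ω ≤ s} ≤ P {ω | X ω < s} + P {ω | X ω = s} := h ▸ measure_union_le _ _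
    _ = P {ω | X ω < s} := by rw [hat s, add_zero]

lemma layer_key {Ω : Type*} [MeasurableSpace Ω] (P : Measure Ω)
    [IsProbabilityMeasure P] (X : Ω → ℝ) (hX : Measurable X)
    (hat : ∀ t : ℝ, P {ω | X ω = t} = 0) :
    ∫ ω in {ω | X ω < 0}, Real.exp (X ω) ∂P
      = ∫ t in Set.Ioc (0:ℝ) 1,
          ((P {ω | X ω ≤ 0}).toReal - (P {ω | X ω ≤ Real.log t}).toReal) := by
  have hs : MeasurableSet {ω | X ω < 0} := measurableSet_lt hX measurable_const
  set g : Ω → ℝ := Set.indicator {ω | X ω < 0} (fun ω => Real.exp (X ω)) with hg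
  have hgmeas : Measurable g := (Real.measurable_exp.comp hX).indicator hs
  have hgnn : 0 ≤ g := fun ω => Set.indicator_nonneg (fun ω _ => (Real.exp_pos _).le) ω
  have hgbd : g ≤ fun _ => (1:ℝ) := by
    intro ω
    by_cases h : ω ∈ {ω | X ω < 0}
    · simp only [hg, Set.indicator_of_mem h]
      exact (Real.exp_le_one_iff.mpr (le_of_lt h))
    · simp [hg, Set.indicator_of_notMem h]
  have hgint : Integrable g P := by
    refine (integrable_const (1:ℝ)).mono' hgmeas.aestronglyMeasurable ?_
    exact Filter.Eventually.of_forall fun ω => by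
      rw [Real.norm_eq_abs, abs_of_nonneg (hgnn ω)]; simpa using hgbd ω
  have h1 : ∫ ω in {ω | X ω < 0}, Real.exp (X ω) ∂P = ∫ ω, g ω ∂P :=
    (integral_indicator hs).symm
  rw [h1, hgint.integral_eq_integral_Ioc_meas_le (Filter.Eventually.of_forall hgnn)
      (Filter.Eventually.of_forall hgbd)]
  refine setIntegral_congr_fun measurableSet_Ioc fun t ht => ?_
  obtain ⟨ht0, ht1⟩ := ht
  have hlog : Real.log t ≤ 0 := Real.log_nonpos ht0.le ht1
  have hset : {a | t ≤ g a} = {ω | X ω < 0} \ {ω | X ω < Real.log t} := by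
    ext ω
    by_cases h : ω ∈ {ω | X ω < 0}
    · simp only [Set.mem_setOf_eq, Set.mem_diff, hg, Set.indicator_of_mem h]
      have hx : X ω < 0 := h
      constructor
      · intro h2
        exact ⟨hx, not_lt.mpr ((Real.log_le_iff_le_exp ht0).mpr h2)⟩
      · intro ⟨_, h2⟩
        exact (Real.log_le_iff_le_exp ht0).mp (not_lt.mp h2)
    · simp only [Set.mem_setOf_eq, Set.mem_diff, hg, Set.indicator_of_notMem h]
      have hx : ¬ X ω < 0 := h
      simp [hx, not_le.mpr ht0]
  have hsub : {ω | X ω < Real.log t} ⊆ {ω | X ω < 0} :=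
    fun ω hω => lt_of_lt_of_le hω hlog
  have hmd : P ({ω | X ω < 0} \ {ω | X ω < Real.log t})
      = P {ω | X ω < 0} - P {ω | X ω < Real.log t} :=
    measure_diff hsub (measurableSet_lt hX measurable_const).nullMeasurableSet
      (measure_ne_top _ _)
  rw [hset, measureReal_def, hmd, meas_lt_eq_meas_le P X hat, meas_lt_eq_meas_le P X hat,
    ENNReal.toReal_sub_of_le (measure_mono ?_) (measure_ne_top _ _)]
  intro ω hω
  exact le_trans hω hlog

/-- The estimate used in Lemma `lem:do4`: for real random variables `X`, `Z`
with atomless laws (continuous CDFs),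
`|E[e^X 1_{X<0}] − E[e^Z 1_{Z<0}]| ≤ 2 sup_t |P(X ≤ t) − P(Z ≤ t)|`,
i.e. twice the Kolmogorov–Smirnov distance between the laws. -/
theorem stmt_18 {Ω₁ Ω₂ : Type*} [MeasurableSpace Ω₁] [MeasurableSpace Ω₂]
    (P₁ : Measure Ω₁) (P₂ : Measure Ω₂)
    [IsProbabilityMeasure P₁] [IsProbabilityMeasure P₂]
    (X : Ω₁ → ℝ) (Z : Ω₂ → ℝ) (hX : Measurable X) (hZ : Measurable Z)
    (hXatomless : ∀ t : ℝ, P₁ {ω | X ω = t} = 0)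
    (hZatomless : ∀ t : ℝ, P₂ {ω | Z ω = t} = 0) :
    |(∫ ω in {ω | X ω < 0}, Real.exp (X ω) ∂P₁) -
        ∫ ω in {ω | Z ω < 0}, Real.exp (Z ω) ∂P₂|
      ≤ 2 * ⨆ t : ℝ, |(P₁ {ω | X ω ≤ t}).toReal - (P₂ {ω | Z ω ≤ t}).toReal| := by
  set F₁ : ℝ → ℝ := fun s => (P₁ {ω | X ω ≤ s}).toReal with hF₁
  set F₂ : ℝ → ℝ := fun s => (P₂ {ω | Z ω ≤ s}).toReal with hF₂
  set M : ℝ := ⨆ t : ℝ, |F₁ t - F₂ t| with hM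
  have hbd : ∀ t : ℝ, |F₁ t - F₂ t| ≤ 2 := by
    intro t
    have h1 : F₁ t ≤ 1 := by
      simpa using ENNReal.toReal_le_of_le_ofReal zero_le_one
        (by simpa using prob_le_one (μ := P₁) (s := {ω | X ω ≤ t}))
    have h2 : F₂ t ≤ 1 := by
      simpa using ENNReal.toReal_le_of_le_ofReal zero_le_one
        (by simpa using prob_le_one (μ := P₂) (s := {ω | Z ω ≤ t}))
    have h3 : 0 ≤ F₁ t := ENNReal.toReal_nonneg
    have h4 : 0 ≤ F₂ t := ENNReal.toReal_nonneg
    rw [abs_sub_le_iff]; constructor <;> linarith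
  have hbdd : BddAbove (Set.range fun t : ℝ => |F₁ t - F₂ t|) :=
    ⟨2, by rintro x ⟨t, rfl⟩; exact hbd t⟩
  have hleM : ∀ t : ℝ, |F₁ t - F₂ t| ≤ M := fun t => le_ciSup hbdd t
  rw [layer_key P₁ X hX hXatomless, layer_key P₂ Z hZ hZatomless]
  -- measurability / integrability of the CDF-difference integrands
  have hmF₁ : Measurable F₁ := by
    have : Monotone F₁ := by
      intro a b hab
      exact ENNReal.toReal_mono (measure_ne_top _ _)
        (measure_mono fun ω hω => le_trans hω hab)
    exact this.measurable
  have hmF₂ : Measurable F₂ := by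
    have : Monotone F₂ := by
      intro a b hab
      exact ENNReal.toReal_mono (measure_ne_top _ _)
        (measure_mono fun ω hω => le_trans hω hab)
    exact this.measurable
  have hint : ∀ (F : ℝ → ℝ), Measurable F → (∀ s, |F s| ≤ 1) →
      IntegrableOn (fun t => F 0 - F (Real.log t)) (Set.Ioc (0:ℝ) 1) := by
    intro F hmF hFb
    have h2 : IntegrableOn (fun _ : ℝ => (2:ℝ)) (Set.Ioc (0:ℝ) 1) volume :=
      (integrableOn_const_iff).mpr (Or.inr (by simp [Real.volume_Ioc]))
    refine h2.mono'
      ((hmF.const_sub _).comp Real.measurable_log).aestronglyMeasurable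
      (Filter.Eventually.of_forall fun t => ?_)
    calc ‖F 0 - F (Real.log t)‖ ≤ |F 0| + |F (Real.log t)| := abs_sub _ _
      _ ≤ 1 + 1 := add_le_add (hFb 0) (hFb _)
      _ = 2 := by norm_num
  have hFb₁ : ∀ s, |F₁ s| ≤ 1 := by
    intro s
    rw [abs_of_nonneg ENNReal.toReal_nonneg]
    simpa using ENNReal.toReal_le_of_le_ofReal zero_le_one
      (by simpa using prob_le_one (μ := P₁) (s := {ω | X ω ≤ s}))
  have hFb₂ : ∀ s, |F₂ s| ≤ 1 := by
    intro s
    rw [abs_of_nonneg ENNReal.toReal_nonneg]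
    simpa using ENNReal.toReal_le_of_le_ofReal zero_le_one
      (by simpa using prob_le_one (μ := P₂) (s := {ω | Z ω ≤ s}))
  have hi₁ := hint F₁ hmF₁ hFb₁
  have hi₂ := hint F₂ hmF₂ hFb₂
  rw [← integral_sub hi₁ hi₂]
  have key : ‖∫ t in Set.Ioc (0:ℝ) 1,
      ((F₁ 0 - F₁ (Real.log t)) - (F₂ 0 - F₂ (Real.log t)))‖
      ≤ (2 * M) * ((volume (Set.Ioc (0:ℝ) 1)).toReal) := by
    refine norm_setIntegral_le_of_norm_le_const_ae' ?_
      (Filter.Eventually.of_forall fun t _ => ?_)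
    · simp [Real.volume_Ioc]
    · show ‖(F₁ 0 - F₁ (Real.log t)) - (F₂ 0 - F₂ (Real.log t))‖ ≤ 2 * M
      have : (F₁ 0 - F₁ (Real.log t)) - (F₂ 0 - F₂ (Real.log t))
          = (F₁ 0 - F₂ 0) - (F₁ (Real.log t) - F₂ (Real.log t)) := by ring
      rw [Real.norm_eq_abs, this]
      calc |(F₁ 0 - F₂ 0) - (F₁ (Real.log t) - F₂ (Real.log t))|
          ≤ |F₁ 0 - F₂ 0| + |F₁ (Real.log t) - F₂ (Real.log t)| := abs_sub _ _
        _ ≤ M + M := add_le_add (hleM 0) (hleM _)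
        _ = 2 * M := by ring
  have hvol : (volume (Set.Ioc (0:ℝ) 1)).toReal = 1 := by
    simp [Real.volume_Ioc]
  rw [hvol, mul_one] at key
  exact key
end
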